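/- arXiv:1908.09491 — 4 statements merged into one kernel-verified Lean document; each statement's English description precedes it below -/
import Mathlib

section
/- Suppose F is an entire function and z_1, z_2 ∈ ℂ are distinct points such that F has no zeros on the closed segment [z_1, z_2]. Then for every R > T := |z_2 − z_1|, |Re{(1/(2πi)) ∫_{z_1}^{z_2} F'(z)/F(z) dz}| ≤ (max_{|ζ| ≤ R} log|F(z_1 + ζ)| − log|F(z_1)|)/(2 log(R/T)) + 1/2, where the integral is taken along the straight line segment from z_1 to z_2. -/
open Complex intervalIntegral

section BacklundAux
open Real Set

-- if cos x ≥ 0 then x is within π/2 of a multiple of 2π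
lemma near_multiple {x : ℝ} (hx : 0 ≤ Real.cos x) :
    |x - 2 * π * round (x / (2 * π))| ≤ π / 2 := by
  set k : ℤ := round (x / (2 * π)) with hk
  have h2π : (0:ℝ) < 2 * π := by positivity
  have h1 : |x / (2 * π) - k| ≤ 1/2 := abs_sub_round (x / (2 * π))
  have h2 : |x - 2 * π * k| ≤ π := by
    have heq : x - 2 * π * k = (x / (2 * π) - k) * (2 * π) := by field_simp
    rw [heq, abs_mul, abs_of_pos h2π]
    nlinarith [h1]
  by_contra hcon
  push_neg at hcon
  have hcos : Real.cos (x - 2 * π * k) = Real.cos x := by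
    rw [show x - 2 * π * k = -(k * (2*π) - x) by ring, Real.cos_neg,
      Real.cos_int_mul_two_pi_sub]
  set y := x - 2 * π * k with hy
  have hneg : Real.cos y < 0 := by
    rcases abs_cases y with ⟨h, h'⟩ | ⟨h, h'⟩
    · apply Real.cos_neg_of_pi_div_two_lt_of_lt <;> nlinarith [abs_le.mp h2, Real.pi_pos]
    · rw [← Real.cos_neg]
      apply Real.cos_neg_of_pi_div_two_lt_of_lt <;> nlinarith [abs_le.mp h2, Real.pi_pos]
  rw [hcos] at hneg; linarith

lemma cos_bound {g : ℝ → ℝ} {a b : ℝ} (hab : a ≤ b) (hg : ContinuousOn g (Icc a b))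
    (h : ∀ t ∈ Icc a b, 0 ≤ Real.cos (g t)) : |g b - g a| ≤ π := by
  have ha : a ∈ Icc a b := ⟨le_refl a, hab⟩
  have hb : b ∈ Icc a b := ⟨hab, le_refl b⟩
  set ka : ℤ := round (g a / (2 * π)) with hka
  set kb : ℤ := round (g b / (2 * π)) with hkb
  have hA := near_multiple (h a ha)
  have hB := near_multiple (h b hb)
  rw [← hka] at hA; rw [← hkb] at hB
  have hπ := Real.pi_pos
  rcases lt_trichotomy ka kb with hlt | heq | hgt
  · exfalso
    have hmem : (2 * π * ka + π) ∈ Icc (g a) (g b) := by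
      have h1 : (ka:ℝ) + 1 ≤ kb := by exact_mod_cast hlt
      constructor
      · nlinarith [abs_le.mp hA]
      · nlinarith [abs_le.mp hB]
    have := intermediate_value_Icc hab hg
    obtain ⟨t, ht, hgt0⟩ := this hmem
    have hceq : Real.cos (g t) = -1 := by
      rw [hgt0, show 2 * π * ka + π = (ka:ℝ) * (2*π) + π by ring,
        Real.cos_int_mul_two_pi_add_pi]
    linarith [h t ht]
  · have : (ka:ℝ) = kb := by exact_mod_cast heq
    rw [abs_le]
    constructor <;> nlinarith [abs_le.mp hA, abs_le.mp hB]
  · exfalso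
    have hmem : (2 * π * kb + π) ∈ Icc (g b) (g a) := by
      have h1 : (kb:ℝ) + 1 ≤ ka := by exact_mod_cast hgt
      constructor
      · nlinarith [abs_le.mp hB]
      · nlinarith [abs_le.mp hA]
    obtain ⟨t, ht, hgt0⟩ := intermediate_value_Icc' hab hg hmem
    have hceq : Real.cos (g t) = -1 := by
      rw [hgt0, show 2 * π * kb + π = (kb:ℝ) * (2*π) + π by ring,
        Real.cos_int_mul_two_pi_add_pi]
    linarith [h t ht]



lemma cos_bound' {g : ℝ → ℝ} {a b : ℝ} (hab : a ≤ b) (hg : ContinuousOn g (Icc a b))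
    (h : ∀ t ∈ Icc a b, Real.cos (g t) ≤ 0) : |g b - g a| ≤ π := by
  have := cos_bound (g := fun t => g t + π) hab (hg.add continuousOn_const)
    (fun t ht => by rw [Real.cos_add_pi]; linarith [h t ht])
  simpa using this

-- sign constancy on an interval with no zeros of cos ∘ g in the interior
lemma sign_const {g : ℝ → ℝ} {a b : ℝ} (hab : a ≤ b) (hg : ContinuousOn g (Icc a b))
    (h : ∀ t ∈ Ioo a b, Real.cos (g t) ≠ 0) :
    (∀ t ∈ Icc a b, 0 ≤ Real.cos (g t)) ∨ (∀ t ∈ Icc a b, Real.cos (g t) ≤ 0) := by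
  by_contra hcon
  push_neg at hcon
  obtain ⟨⟨x, hx, hxneg⟩, ⟨y, hy, hypos⟩⟩ := hcon
  have hcont : ContinuousOn (fun t => Real.cos (g t)) (Icc a b) :=
    Real.continuous_cos.comp_continuousOn hg
  rcases le_total x y with hxy | hyx
  · have hsub : Icc x y ⊆ Icc a b := Icc_subset_Icc hx.1 hy.2
    have := intermediate_value_Ioo hxy (hcont.mono hsub)
    obtain ⟨t, ht, ht0⟩ := this (show (0:ℝ) ∈ Ioo _ _ from ⟨hxneg, hypos⟩)
    exact h t (Ioo_subset_Ioo hx.1 hy.2 ht) ht0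
  · have hsub : Icc y x ⊆ Icc a b := Icc_subset_Icc hy.1 hx.2
    have := intermediate_value_Ioo' hyx (hcont.mono hsub)
    obtain ⟨t, ht, ht0⟩ := this (show (0:ℝ) ∈ Ioo _ _ from ⟨hxneg, hypos⟩)
    exact h t (Ioo_subset_Ioo hy.1 hx.2 ht) ht0

lemma arg_bound (n : ℕ) : ∀ (g : ℝ → ℝ) (a b : ℝ), a ≤ b → ContinuousOn g (Icc a b) →
    {t ∈ Ioo a b | Real.cos (g t) = 0}.Finite →
    {t ∈ Ioo a b | Real.cos (g t) = 0}.ncard ≤ n →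
    |g b - g a| ≤ (n + 1) * π := by
  induction n using Nat.strong_induction_on with
  | _ n ih =>
    intro g a b hab hg hfin hcard
    set Z := {t ∈ Ioo a b | Real.cos (g t) = 0} with hZ
    by_cases hne : Z = ∅
    · have hnz : ∀ t ∈ Ioo a b, Real.cos (g t) ≠ 0 := by
        intro t ht h0
        exact absurd (show t ∈ Z from ⟨ht, h0⟩) (by simp [hne])
      have hπ := Real.pi_pos
      have : |g b - g a| ≤ π := by
        rcases sign_const hab hg hnz with hpos | hneg
        · exact cos_bound hab hg hpos
        · exact cos_bound' hab hg hneg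
      nlinarith [this]
    · obtain ⟨m, hm⟩ := Set.nonempty_iff_ne_empty.mpr hne
      obtain ⟨hmIoo, hm0⟩ := hm
      set Z₁ := {t ∈ Ioo a m | Real.cos (g t) = 0} with hZ₁
      set Z₂ := {t ∈ Ioo m b | Real.cos (g t) = 0} with hZ₂
      have hsub1 : Z₁ ⊆ Z := fun t ⟨ht, h0⟩ => ⟨Ioo_subset_Ioo le_rfl hmIoo.2.le ht, h0⟩
      have hsub2 : Z₂ ⊆ Z := fun t ⟨ht, h0⟩ => ⟨Ioo_subset_Ioo hmIoo.1.le le_rfl ht, h0⟩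
      have hfin1 := hfin.subset hsub1
      have hfin2 := hfin.subset hsub2
      have hdisj : Disjoint Z₁ Z₂ := by
        rw [Set.disjoint_left]
        rintro t ⟨ht, -⟩ ⟨ht', -⟩
        exact absurd ht'.1 (not_lt.mpr ht.2.le)
      have hmnot : m ∉ Z₁ ∪ Z₂ := by
        rintro (⟨ht, -⟩ | ⟨ht, -⟩) <;> simp at ht
      have hsubU : Z₁ ∪ Z₂ ∪ {m} ⊆ Z := by
        intro t ht
        rcases ht with (h | h) | h
        · exact hsub1 h
        · exact hsub2 h
        · rcases h; exact ⟨hmIoo, hm0⟩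
      have hcardsum : Z₁.ncard + Z₂.ncard + 1 ≤ n := by
        have h1 : (Z₁ ∪ Z₂ ∪ {m}).ncard = Z₁.ncard + Z₂.ncard + 1 := by
          rw [Set.ncard_union_eq (by
              rw [Set.disjoint_left]
              rintro t ht rfl
              exact hmnot ht) (hfin1.union hfin2) (Set.finite_singleton m),
            Set.ncard_union_eq hdisj hfin1 hfin2, Set.ncard_singleton]
        have h2 := Set.ncard_le_ncard hsubU hfin
        omega
      have hb1 : |g m - g a| ≤ (Z₁.ncard + 1) * π := by
        apply ih Z₁.ncard (by omega) g a m hmIoo.1.le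
          (hg.mono (Icc_subset_Icc le_rfl hmIoo.2.le)) hfin1 le_rfl
      have hb2 : |g b - g m| ≤ (Z₂.ncard + 1) * π := by
        apply ih Z₂.ncard (by omega) g m b hmIoo.2.le
          (hg.mono (Icc_subset_Icc hmIoo.1.le le_rfl)) hfin2 le_rfl
      have htri : |g b - g a| ≤ |g m - g a| + |g b - g m| := by
        rw [abs_sub_comm (g b) (g m)] at *
        calc |g b - g a| = |(g m - g a) - (g m - g b)| := by ring_nf
          _ ≤ _ := abs_sub _ _
      have hπ := Real.pi_pos
      have hn : (Z₁.ncard : ℝ) + Z₂.ncard + 1 ≤ n := by exact_mod_cast hcardsum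
      calc |g b - g a| ≤ (Z₁.ncard + 1) * π + (Z₂.ncard + 1) * π := by
            linarith [hb1, hb2, htri]
        _ ≤ (n + 1) * π := by nlinarith [hn]

end BacklundAux

section BacklundAux2
open Complex Set Topology Filter Metric intervalIntegral

lemma conj_reflect_diff {f : ℂ → ℂ} (hf : Differentiable ℂ f) :
    Differentiable ℂ (fun z => (starRingEnd ℂ) (f ((starRingEnd ℂ) z))) := by
  intro x
  have hd := (hf ((starRingEnd ℂ) x)).hasDerivAt
  rw [hasDerivAt_iff_tendsto_slope] at hd
  have key : HasDerivAt (fun z => (starRingEnd ℂ) (f ((starRingEnd ℂ) z)))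
      ((starRingEnd ℂ) (deriv f ((starRingEnd ℂ) x))) x := by
    rw [hasDerivAt_iff_tendsto_slope]
    have hmap : Filter.Tendsto (starRingEnd ℂ) (𝓝[≠] x) (𝓝[≠] ((starRingEnd ℂ) x)) := by
      rw [tendsto_nhdsWithin_iff]
      constructor
      · exact (Complex.continuous_conj.tendsto x).mono_left nhdsWithin_le_nhds
      · filter_upwards [self_mem_nhdsWithin] with z hz
        simp only [mem_compl_iff, mem_singleton_iff] at hz ⊢
        exact fun h => hz (by simpa using congrArg (starRingEnd ℂ) h)
    have heq : (slope (fun z => (starRingEnd ℂ) (f ((starRingEnd ℂ) z))) x) =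
        fun z => (starRingEnd ℂ) (slope f ((starRingEnd ℂ) x) ((starRingEnd ℂ) z)) := by
      funext z
      simp only [slope_def_field, map_div₀, map_sub, Complex.conj_conj]
    rw [heq]
    exact (Complex.continuous_conj.tendsto _).comp (hd.comp hmap)
  exact key.differentiableAt


lemma factor_out (T : Finset ℂ) : ∀ (G : ℂ → ℂ), Differentiable ℂ G →
    (∀ s ∈ T, G s = 0) →
    ∃ H : ℂ → ℂ, Differentiable ℂ H ∧ ∀ ζ, G ζ = (∏ s ∈ T, (ζ - s)) * H ζ := by
  induction T using Finset.induction_on with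
  | empty => intro G hG _; exact ⟨G, hG, fun ζ => by simp⟩
  | @insert s T hs ih =>
    intro G hG hT
    set H₁ := dslope G s with hH₁
    have hH₁diff : Differentiable ℂ H₁ := by
      intro x
      by_cases hx : x = s
      · subst hx
        obtain ⟨p, hp⟩ := hG.analyticAt x
        exact (hp.has_fpower_series_dslope_fslope).analyticAt.differentiableAt
      · exact (differentiableAt_dslope_of_ne hx).mpr (hG x)
    have hfac1 : ∀ ζ, G ζ = (ζ - s) * H₁ ζ := by
      intro ζ
      have := sub_smul_dslope G s ζ
      rw [hT s (Finset.mem_insert_self s T)] at this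
      simpa [smul_eq_mul] using this.symm
    have hH₁T : ∀ t ∈ T, H₁ t = 0 := by
      intro t ht
      have hts : t ≠ s := fun h => hs (h ▸ ht)
      have := hfac1 t
      rw [hT t (Finset.mem_insert_of_mem ht)] at this
      exact (mul_eq_zero.mp this.symm).resolve_left (sub_ne_zero.mpr hts)
    obtain ⟨H, hHdiff, hHfac⟩ := ih H₁ hH₁diff hH₁T
    refine ⟨H, hHdiff, fun ζ => ?_⟩
    rw [hfac1 ζ, hHfac ζ, Finset.prod_insert hs]
    ring

lemma zero_count {ρ : ℝ} (hρ : 1 < ρ) (G H : ℂ → ℂ) (hH : Differentiable ℂ H)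
    (T : Finset ℂ) (hfac : ∀ ζ, G ζ = (∏ s ∈ T, (ζ - s)) * H ζ)
    (hsmall : ∀ s ∈ T, ‖s‖ ≤ 1) (B : ℝ)
    (hB : ∀ ζ : ℂ, ‖ζ‖ ≤ ρ → ‖G ζ‖ ≤ B) :
    ‖G 0‖ * ρ ^ T.card ≤ B := by
  have hρ0 : (0:ℝ) < ρ := by linarith
  set J : ℂ → ℂ := fun ζ => H ζ * ∏ s ∈ T, ((ρ:ℂ)^2 - (starRingEnd ℂ) s * ζ) with hJ
  have hJdiff : Differentiable ℂ J :=
    hH.mul (Differentiable.fun_finsetProd fun s _ =>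
      (differentiable_const _).sub ((differentiable_const _).mul differentiable_id))
  have hfrontier : ∀ ζ ∈ frontier (ball (0:ℂ) ρ), ‖J ζ‖ ≤ ρ ^ T.card * B := by
    intro ζ hζ
    rw [frontier_ball 0 (ne_of_gt hρ0)] at hζ
    have hζabs : ‖ζ‖ = ρ := by simpa [Complex.dist_eq] using hζ
    have hfactor : ∀ s ∈ T, ‖(ρ:ℂ)^2 - (starRingEnd ℂ) s * ζ‖
        = ρ * ‖ζ - s‖ := by
      intro s _
      have hζζ : (ρ:ℂ)^2 = ζ * (starRingEnd ℂ) ζ := by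
        rw [Complex.mul_conj]
        norm_cast
        rw [← hζabs, Complex.sq_norm]
      rw [hζζ, show ζ * (starRingEnd ℂ) ζ - (starRingEnd ℂ) s * ζ
          = ζ * ((starRingEnd ℂ) (ζ - s)) by rw [map_sub]; ring, norm_mul,
        Complex.norm_conj, hζabs]
    calc ‖J ζ‖ = ‖H ζ‖ * ∏ s ∈ T, ‖(ρ:ℂ)^2 - (starRingEnd ℂ) s * ζ‖ := by
          simp [hJ, norm_mul, norm_prod]
      _ = ‖H ζ‖ * ∏ s ∈ T, (ρ * ‖ζ - s‖) :=
          by rw [Finset.prod_congr rfl hfactor]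
      _ = ρ ^ T.card * (‖∏ s ∈ T, (ζ - s)‖ * ‖H ζ‖) := by
          rw [Finset.prod_mul_distrib, Finset.prod_const, norm_prod]; ring
      _ = ρ ^ T.card * ‖G ζ‖ := by rw [← norm_mul, ← hfac ζ]
      _ ≤ ρ ^ T.card * B := by
          apply mul_le_mul_of_nonneg_left (hB ζ (le_of_eq hζabs)) (by positivity)
  have hmax : ‖J 0‖ ≤ ρ ^ T.card * B :=
    Complex.norm_le_of_forall_mem_frontier_norm_le isBounded_ball
      hJdiff.diffContOnCl hfrontier
      (by rw [closure_ball 0 (ne_of_gt hρ0)]; exact mem_closedBall_self (le_of_lt hρ0))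
  have hJ0 : ‖J 0‖ = ‖H 0‖ * (ρ ^ T.card) * ρ ^ T.card := by
    simp only [hJ, norm_mul, norm_prod]
    rw [Finset.prod_congr rfl (show ∀ s ∈ T, ‖(ρ:ℂ)^2 - (starRingEnd ℂ) s * 0‖ = ρ^2
      from fun s _ => by
        rw [mul_zero, sub_zero, ← Complex.ofReal_pow, Complex.norm_real, Real.norm_eq_abs, abs_of_pos (by positivity)]),
      Finset.prod_const]
    ring
  have hpow : (0:ℝ) < ρ ^ T.card := pow_pos hρ0 _
  have h2 : ‖H 0‖ * ρ ^ T.card ≤ B := by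
    have := hmax
    rw [hJ0] at this
    nlinarith [this, hpow]
  have h1 : ‖G 0‖ ≤ ‖H 0‖ := by
    rw [hfac 0, norm_mul]
    apply mul_le_of_le_one_left (norm_nonneg _)
    rw [norm_prod]
    apply Finset.prod_le_one (fun s _ => norm_nonneg _) (fun s hsT => by
      rw [zero_sub, norm_neg]; exact hsmall s hsT)
  calc ‖G 0‖ * ρ ^ T.card ≤ ‖H 0‖ * ρ ^ T.card := by
        apply mul_le_mul_of_nonneg_right h1 (le_of_lt hpow)
    _ ≤ B := h2


lemma affine_hasDerivAt (F : ℂ → ℂ) (hF : Differentiable ℂ F) (z₁ w : ℂ) (t : ℝ) :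
    HasDerivAt (fun s : ℝ => F (z₁ + s * w)) (deriv F (z₁ + t * w) * w) t := by
  have h1 : HasDerivAt (fun ζ : ℂ => F (z₁ + ζ * w)) (deriv F (z₁ + t * w) * w) (t : ℂ) := by
    have hinner : HasDerivAt (fun ζ : ℂ => z₁ + ζ * w) w (t : ℂ) := by
      simpa using ((hasDerivAt_id ((t:ℂ))).mul_const w).const_add z₁
    exact (hF (z₁ + t * w)).hasDerivAt.comp (t : ℂ) hinner
  exact h1.comp_ofReal

lemma re_inv_two_pi_I (z : ℂ) :
    ((1 / (2 * ↑Real.pi * Complex.I)) * z).re = z.im / (2 * Real.pi) := by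
  have hπ : (Real.pi : ℝ) ≠ 0 := Real.pi_ne_zero
  have h2 : ((2 * Real.pi : ℝ) : ℂ) ≠ 0 := by
    simp [Complex.ofReal_ne_zero, hπ]
  have h1 : (2 * ↑Real.pi * Complex.I : ℂ) ≠ 0 := by
    push_cast at h2 ⊢
    exact mul_ne_zero h2 Complex.I_ne_zero
  have h : (1 / (2 * ↑Real.pi * Complex.I) : ℂ) = -Complex.I / ((2 * Real.pi : ℝ) : ℂ) := by
    rw [div_eq_div_iff h1 h2]
    push_cast
    linear_combination (2 * (Real.pi:ℂ)) * Complex.I_sq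
  rw [h, div_mul_eq_mul_div, Complex.div_ofReal_re]
  congr 1
  simp [Complex.mul_re]




end BacklundAux2

open Complex Set Metric Topology Filter intervalIntegral in
/-- Backlund's lemma: bound on the real part of the logarithmic integral of an entire
function along a segment free of zeros. -/
theorem backlund_lemma (F : ℂ → ℂ) (hF : Differentiable ℂ F)
    (z₁ z₂ : ℂ) (hne : z₁ ≠ z₂)
    (hzero : ∀ z ∈ segment ℝ z₁ z₂, F z ≠ 0)
    (R : ℝ) (hR : ‖z₂ - z₁‖ < R) :
    |((1 / (2 * Real.pi * Complex.I)) *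
        ∫ t in (0:ℝ)..1,
          (deriv F (z₁ + t * (z₂ - z₁)) / F (z₁ + t * (z₂ - z₁))) * (z₂ - z₁)).re|
      ≤ (sSup ((fun ζ : ℂ => Real.log ‖F (z₁ + ζ)‖) ''
            Metric.closedBall (0 : ℂ) R)
          - Real.log ‖F z₁‖)
        / (2 * Real.log (R / ‖z₂ - z₁‖)) + 1 / 2 := by
  set w : ℂ := z₂ - z₁ with hwdef
  have hw : w ≠ 0 := sub_ne_zero.mpr (Ne.symm hne)
  have hT : 0 < ‖w‖ := by simpa using hw
  set T : ℝ := ‖w‖ with hTdef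
  set ρ : ℝ := R / T with hρdef
  have hρ : 1 < ρ := (one_lt_div hT).mpr hR
  -- points of the segment
  have hseg : ∀ t : ℝ, t ∈ Icc (0:ℝ) 1 → (z₁ + t * w) ∈ segment ℝ z₁ z₂ := by
    intro t ht
    rw [segment_eq_image']
    exact ⟨t, ht, by simp [Complex.real_smul, hwdef]⟩
  have hFne : ∀ t : ℝ, t ∈ Icc (0:ℝ) 1 → F (z₁ + t * w) ≠ 0 :=
    fun t ht => hzero _ (hseg t ht)
  have hFz₁ : F z₁ ≠ 0 := hzero z₁ (left_mem_segment ℝ z₁ z₂)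
  have habsz₁ : 0 < ‖F z₁‖ := by simpa using hFz₁
  -- δ-neighborhood where F ∘ γ ≠ 0
  obtain ⟨δ, hδpos, hδ⟩ : ∃ δ > 0, ∀ t : ℝ, t ∈ Ioo (-δ) (1+δ) → F (z₁ + t * w) ≠ 0 := by
    have hV : IsOpen ((fun t : ℝ => z₁ + t * w) ⁻¹' {z | F z ≠ 0}) := by
      apply IsOpen.preimage
      · exact continuous_const.add (Complex.continuous_ofReal.mul continuous_const)
      · exact isOpen_compl_iff.mpr (isClosed_singleton.preimage hF.continuous)
    have hsub : Icc (0:ℝ) 1 ⊆ (fun t : ℝ => z₁ + t * w) ⁻¹' {z | F z ≠ 0} :=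
      fun t ht => hFne t ht
    obtain ⟨δ, hδpos, hδsub⟩ := isCompact_Icc.exists_thickening_subset_open hV hsub
    refine ⟨δ, hδpos, fun t ht => ?_⟩
    have : t ∈ Metric.thickening δ (Icc (0:ℝ) 1) := by
      rw [Metric.mem_thickening_iff]
      rcases le_total t 0 with h0 | h0
      · exact ⟨0, ⟨le_refl 0, zero_le_one⟩, by
          rw [Real.dist_eq]; rw [_root_.abs_of_nonpos (by linarith)]; linarith [ht.1]⟩
      · rcases le_total t 1 with h1 | h1
        · exact ⟨t, ⟨h0, h1⟩, by rw [Real.dist_eq, sub_self, abs_zero]; exact hδpos⟩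
        · exact ⟨1, ⟨zero_le_one, le_refl 1⟩, by
            rw [Real.dist_eq, _root_.abs_of_nonneg (by linarith)]; linarith [ht.2]⟩
    exact hδsub this
  -- the logarithmic derivative integrand
  set g : ℝ → ℂ := fun t => deriv F (z₁ + t * w) / F (z₁ + t * w) * w with hgdef
  have hIoo : IsOpen (Ioo (-δ) (1+δ)) := isOpen_Ioo
  have hmem01 : Icc (0:ℝ) 1 ⊆ Ioo (-δ) (1+δ) :=
    fun t ht => ⟨by linarith [ht.1], by linarith [ht.2]⟩
  have hgcont : ContinuousOn g (Ioo (-δ) (1+δ)) := by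
    apply ContinuousOn.mul _ continuousOn_const
    apply ContinuousOn.div
    · exact ((hF.contDiff (n := 2)).continuous_deriv one_le_two).comp_continuousOn
        ((continuous_const.add (Complex.continuous_ofReal.mul continuous_const)).continuousOn)
    · exact (hF.continuous.comp
        (continuous_const.add (Complex.continuous_ofReal.mul continuous_const))).continuousOn
    · exact fun t ht => hδ t ht
  set L : ℝ → ℂ := fun u => ∫ s in (0:ℝ)..u, g s with hLdef
  have hL0 : L 0 = 0 := integral_same
  have hLd : ∀ t ∈ Ioo (-δ) (1+δ), HasDerivAt L (g t) t := by
    intro t ht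
    apply integral_hasDerivAt_right
    · apply ContinuousOn.intervalIntegrable
      exact hgcont.mono (Set.ordConnected_Ioo.uIcc_subset
        (show (0:ℝ) ∈ Ioo (-δ) (1+δ) by constructor <;> [linarith; linarith]) ht)
    · exact (hgcont.stronglyMeasurableAtFilter hIoo) t ht
    · exact (hgcont t ht).continuousAt (hIoo.mem_nhds ht)
  have hLcont : ContinuousOn L (Icc 0 1) :=
    fun t ht => ((hLd t (hmem01 ht)).continuousAt).continuousWithinAt
  -- f t = F z₁ * exp (L t) on [0,1]
  have hexp : ∀ t ∈ Icc (0:ℝ) 1, F (z₁ + t * w) = F z₁ * Complex.exp (L t) := by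
    have hq : ∀ t ∈ Icc (0:ℝ) 1,
        F (z₁ + t * w) * Complex.exp (-L t) = F (z₁ + (0:ℝ) * w) * Complex.exp (-L 0) := by
      apply constant_of_has_deriv_right_zero
      · apply ContinuousOn.mul
        · exact (hF.continuous.comp
            (continuous_const.add (Complex.continuous_ofReal.mul continuous_const))).continuousOn
        · exact (Complex.continuous_exp.comp_continuousOn (hLcont.neg))
      · intro t ht
        have htIoo : t ∈ Ioo (-δ) (1+δ) := hmem01 (Ico_subset_Icc_self ht)
        have h1 : HasDerivAt (fun s : ℝ => F (z₁ + s * w) * Complex.exp (-L s))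
            (0 : ℂ) t := by
          have hf' := affine_hasDerivAt F hF z₁ w t
          have hL' := hLd t htIoo
          have he : HasDerivAt (fun s : ℝ => Complex.exp (-L s))
              (-g t * Complex.exp (-L t)) t := by
            have := (hL'.neg).cexp
            simpa [mul_comm] using this
          refine (hf'.fun_mul he).congr_deriv ?_
          have hne0 := hδ t htIoo
          have hgt : g t * F (z₁ + t * w) = deriv F (z₁ + t * w) * w := by
            simp only [hgdef]; rw [div_mul_eq_mul_div, div_mul_cancel₀ _ hne0]
          linear_combination (-Complex.exp (-L t)) * hgt
        exact h1.hasDerivWithinAt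
    intro t ht
    have := hq t ht
    simp only [hL0, Complex.ofReal_zero, zero_mul, add_zero, neg_zero, Complex.exp_zero,
      mul_one] at this
    have hEne : Complex.exp (-L t) ≠ 0 := Complex.exp_ne_zero _
    calc F (z₁ + t * w) = F (z₁ + t * w) * Complex.exp (-L t) * Complex.exp (L t) := by
          rw [mul_assoc, ← Complex.exp_add]; simp
      _ = F z₁ * Complex.exp (L t) := by rw [this]
  -- normalization constant
  set c : ℂ := ((‖F z₁‖ : ℝ) : ℂ) / F z₁ with hcdef
  have hcabs : ‖c‖ = 1 := by
    rw [hcdef, norm_div, Complex.norm_real, norm_norm,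
      div_self habsz₁.ne']
  have hcF : c * F z₁ = ((‖F z₁‖ : ℝ) : ℂ) := by
    rw [hcdef]; field_simp
  set ψ : ℂ → ℂ := fun ζ => c * F (z₁ + ζ * w) with hψdef
  have hψdiff : Differentiable ℂ ψ :=
    (differentiable_const c).mul (hF.comp ((differentiable_const z₁).add
      (differentiable_id.mul (differentiable_const w))))
  set G : ℂ → ℂ := fun ζ => (ψ ζ + (starRingEnd ℂ) (ψ ((starRingEnd ℂ) ζ))) / 2 with hGdef
  have hGdiff : Differentiable ℂ G := (hψdiff.add (conj_reflect_diff hψdiff)).div_const 2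
  have hGreal : ∀ t : ℝ, G (t : ℂ) = (((ψ (t:ℂ)).re : ℝ) : ℂ) := by
    intro t
    show (ψ (t:ℂ) + (starRingEnd ℂ) (ψ ((starRingEnd ℂ) (t:ℂ)))) / 2 = _
    rw [Complex.conj_ofReal, Complex.add_conj]
    push_cast
    ring
  have hψt : ∀ t ∈ Icc (0:ℝ) 1,
      ψ (t:ℂ) = ((‖F z₁‖ : ℝ) : ℂ) * Complex.exp (L t) := by
    intro t ht
    show c * F (z₁ + (t:ℂ) * w) = _
    rw [hexp t ht, ← mul_assoc, hcF]
  have hret : ∀ t ∈ Icc (0:ℝ) 1, (ψ (t:ℂ)).re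
      = ‖F z₁‖ * (Real.exp ((L t).re) * Real.cos ((L t).im)) := by
    intro t ht
    rw [hψt t ht, Complex.re_ofReal_mul, Complex.exp_re]
  -- the zero set
  set Zset : Set ℝ := {t ∈ Ioo (0:ℝ) 1 | Real.cos ((L t).im) = 0} with hZdef
  have hGzero : ∀ t ∈ Zset, G (t:ℂ) = 0 := by
    rintro t ⟨ht, hcos⟩
    rw [hGreal t, hret t (Ioo_subset_Icc_self ht), hcos]
    simp
  have hψ0 : ψ (0:ℂ) = ((‖F z₁‖ : ℝ) : ℂ) := by
    have h := hψt 0 ⟨le_refl 0, zero_le_one⟩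
    rw [Complex.ofReal_zero] at h
    rw [h, hL0, Complex.exp_zero, mul_one]
  have hG0 : G 0 = ((‖F z₁‖ : ℝ) : ℂ) := by
    have h := hGreal 0
    rw [Complex.ofReal_zero] at h
    rw [h, hψ0]
    norm_cast
  have habsG0 : ‖G 0‖ = ‖F z₁‖ := by
    rw [hG0, Complex.norm_real, norm_norm]
  have hG0ne : G 0 ≠ 0 := by
    rw [hG0]
    exact_mod_cast habsz₁.ne'
  -- finiteness of the zero set
  have hZfin : Zset.Finite := by
    by_contra hinf
    have himg : Set.Infinite ((fun t : ℝ => (t:ℂ)) '' Zset) :=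
      Set.Infinite.image (Set.injOn_of_injective Complex.ofReal_injective) hinf
    have hcomp : IsCompact ((fun t : ℝ => (t:ℂ)) '' Icc 0 1) :=
      isCompact_Icc.image Complex.continuous_ofReal
    obtain ⟨x, hxK, hacc⟩ := himg.exists_accPt_of_subset_isCompact hcomp
      (image_mono (fun t ht => Ioo_subset_Icc_self ht.1))
    rw [accPt_iff_frequently] at hacc
    have hfreq : ∃ᶠ y in 𝓝[≠] x, G y = 0 := by
      rw [frequently_nhdsWithin_iff]
      apply hacc.mono
      rintro y ⟨hyx, t, ht, rfl⟩
      exact ⟨hGzero t ht, by simpa using hyx⟩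
    have hanal : AnalyticOnNhd ℂ G univ := fun z _ => hGdiff.analyticAt z
    have heq := hanal.eqOn_zero_of_preconnected_of_frequently_eq_zero
      isPreconnected_univ (mem_univ x) hfreq
    exact hG0ne (heq (mem_univ 0))
  -- finsets of zeros
  set S : Finset ℝ := hZfin.toFinset with hSdef
  set Tfin : Finset ℂ := S.image (fun t : ℝ => (t:ℂ)) with hTfdef
  have hcardeq : Tfin.card = S.card :=
    Finset.card_image_of_injective S Complex.ofReal_injective
  have hTzero : ∀ s ∈ Tfin, G s = 0 := by
    intro s hs
    obtain ⟨t, ht, rfl⟩ := Finset.mem_image.mp hs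
    exact hGzero t (hZfin.mem_toFinset.mp ht)
  have hTsmall : ∀ s ∈ Tfin, ‖s‖ ≤ 1 := by
    intro s hs
    obtain ⟨t, ht, rfl⟩ := Finset.mem_image.mp hs
    have h := (hZfin.mem_toFinset.mp ht).1
    rw [Complex.norm_real, Real.norm_eq_abs, _root_.abs_of_nonneg h.1.le]
    exact h.2.le
  obtain ⟨H, hHdiff, hHfac⟩ := factor_out Tfin G hGdiff hTzero
  -- the sup bound
  set M : ℝ := sSup ((fun ζ : ℂ => Real.log ‖F (z₁ + ζ)‖) ''
      Metric.closedBall (0 : ℂ) R) with hMdef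
  have hR0 : (0:ℝ) < R := lt_trans hT hR
  have hBdd : BddAbove ((fun ζ : ℂ => Real.log ‖F (z₁ + ζ)‖) ''
      Metric.closedBall (0 : ℂ) R) := by
    obtain ⟨x₀, hx₀, hmax⟩ := (isCompact_closedBall (0:ℂ) R).exists_isMaxOn
      ⟨0, mem_closedBall_self hR0.le⟩
      ((continuous_norm.comp (hF.continuous.comp
        (continuous_const.add continuous_id))).continuousOn)
    refine ⟨Real.log (max 1 (‖F (z₁ + x₀)‖)), ?_⟩
    rintro y ⟨ζ, hζ, rfl⟩
    show Real.log (‖F (z₁ + ζ)‖) ≤ Real.log (max 1 (‖F (z₁ + x₀)‖))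
    rcases eq_or_lt_of_le (norm_nonneg (F (z₁ + ζ))) with h0 | h0
    · rw [← h0, Real.log_zero]
      exact Real.log_nonneg (le_max_left _ _)
    · exact Real.log_le_log h0 (le_trans (hmax hζ) (le_max_right _ _))
  have hMge : Real.log (‖F z₁‖) ≤ M :=
    le_csSup hBdd ⟨0, mem_closedBall_self hR0.le, by simp⟩
  have hFbound : ∀ ξ : ℂ, ‖ξ‖ ≤ ρ → ‖F (z₁ + ξ * w)‖ ≤ Real.exp M := by
    intro ξ hξ
    have hmem : ξ * w ∈ Metric.closedBall (0:ℂ) R := by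
      rw [mem_closedBall_zero_iff, norm_mul]
      calc ‖ξ‖ * ‖w‖ ≤ ρ * T := by
            apply mul_le_mul_of_nonneg_right hξ (norm_nonneg w)
        _ = R := by rw [hρdef]; field_simp
    rcases eq_or_ne (F (z₁ + ξ * w)) 0 with h | h
    · rw [h, norm_zero]; exact (Real.exp_pos M).le
    · have hpos : 0 < ‖F (z₁ + ξ * w)‖ := by simpa using h
      calc ‖F (z₁ + ξ * w)‖ = Real.exp (Real.log (‖F (z₁ + ξ * w)‖)) :=
            (Real.exp_log hpos).symm
        _ ≤ Real.exp M := Real.exp_le_exp.mpr (le_csSup hBdd ⟨ξ * w, hmem, rfl⟩)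
  have hGbound : ∀ ζ : ℂ, ‖ζ‖ ≤ ρ → ‖G ζ‖ ≤ Real.exp M := by
    intro ζ hζ
    have h1 : ‖ψ ζ‖ ≤ Real.exp M := by
      show ‖c * F (z₁ + ζ * w)‖ ≤ _
      rw [norm_mul, hcabs, one_mul]
      exact hFbound ζ hζ
    have h2 : ‖ψ ((starRingEnd ℂ) ζ)‖ ≤ Real.exp M := by
      show ‖c * F (z₁ + (starRingEnd ℂ) ζ * w)‖ ≤ _
      rw [norm_mul, hcabs, one_mul]
      exact hFbound _ (by rwa [Complex.norm_conj])
    calc ‖G ζ‖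
        ≤ (‖ψ ζ‖ + ‖(starRingEnd ℂ) (ψ ((starRingEnd ℂ) ζ))‖) / 2 := by
          show ‖(ψ ζ + (starRingEnd ℂ) (ψ ((starRingEnd ℂ) ζ))) / 2‖ ≤ _
          rw [norm_div, Complex.norm_two]
          gcongr
          exact norm_add_le _ _
      _ ≤ (Real.exp M + Real.exp M) / 2 := by
          rw [Complex.norm_conj] at *
          linarith [h1, h2]
      _ = Real.exp M := by ring
  have hcount : (S.card : ℝ) * Real.log ρ ≤ M - Real.log (‖F z₁‖) := by
    have h := zero_count hρ G H hHdiff Tfin hHfac hTsmall (Real.exp M) hGbound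
    rw [habsG0, hcardeq] at h
    have hlog := Real.log_le_log (by positivity) h
    rw [Real.log_mul habsz₁.ne' (by positivity), Real.log_pow, Real.log_exp] at hlog
    linarith
  -- the argument bound
  have hLim : ContinuousOn (fun t => (L t).im) (Icc (0:ℝ) 1) :=
    Complex.continuous_im.comp_continuousOn hLcont
  have hbnd : |(L 1).im - (L 0).im| ≤ ((S.card : ℝ) + 1) * Real.pi := by
    have := arg_bound S.card (fun t => (L t).im) 0 1 zero_le_one hLim
      (by exact hZfin) (by rw [← Set.ncard_eq_toFinset_card Zset hZfin])
    exact_mod_cast this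
  rw [hL0] at hbnd
  simp only [Complex.zero_im, sub_zero] at hbnd
  -- reduce the LHS
  have hLHS : ((1 / (2 * Real.pi * Complex.I)) *
      ∫ t in (0:ℝ)..1, (deriv F (z₁ + t * w) / F (z₁ + t * w)) * w).re
      = (L 1).im / (2 * Real.pi) := re_inv_two_pi_I _
  rw [hLHS]
  have hπ := Real.pi_pos
  have hlogρ : 0 < Real.log ρ := Real.log_pos hρ
  have hcard' : (S.card : ℝ) ≤ (M - Real.log (‖F z₁‖)) / Real.log ρ := by
    rw [le_div_iff₀ hlogρ]
    linarith
  calc |(L 1).im / (2 * Real.pi)| = |(L 1).im| / (2 * Real.pi) := by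
        rw [abs_div, _root_.abs_of_pos (show (0:ℝ) < 2 * Real.pi by positivity)]
    _ ≤ (((S.card : ℝ) + 1) * Real.pi) / (2 * Real.pi) := by
        gcongr
    _ = ((S.card : ℝ) + 1) / 2 := by field_simp
    _ ≤ ((M - Real.log (‖F z₁‖)) / Real.log ρ + 1) / 2 := by linarith
    _ = (M - Real.log (‖F z₁‖)) / (2 * Real.log ρ) + 1 / 2 := by
        field_simp
end

section
/- Let F be an entire function and z_1 ∈ ℂ a point with F(z_1) ≠ 0, and define the entire function Φ(z) = (1/2)(F(z_1 + iz)/F(z_1) + conj(F(z_1 + i·conj(z)))/conj(F(z_1))). Then for all 0 < T < R, the number n(T, Φ) of zeros of Φ, counted with multiplicity, in the closed disc {z : |z| ≤ T} satisfies n(T, Φ) ≤ (max_{|ζ| ≤ R} log|F(z_1 + iζ)| − log|F(z_1)|)/log(R/T). -/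
open Complex Metric Set Function

lemma order_ne_top' {f : ℂ → ℂ} (hf : Differentiable ℂ f) {w : ℂ} (hw : f w ≠ 0) (z : ℂ) :
    analyticOrderAt f z ≠ ⊤ := by
  intro h
  rw [analyticOrderAt_eq_top] at h
  have hfreq : ∃ᶠ y in nhdsWithin z {z}ᶜ, f y = 0 :=
    (h.filter_mono nhdsWithin_le_nhds).frequently
  have := AnalyticOnNhd.eqOn_zero_of_preconnected_of_frequently_eq_zero
    (U := Set.univ) (fun x _ => hf.analyticAt x) isPreconnected_univ (Set.mem_univ z) hfreq
  exact hw (this (Set.mem_univ w))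

lemma order_eq_zero_of_ne' {f : ℂ → ℂ} (hf : Differentiable ℂ f) {z : ℂ} (hz : f z ≠ 0) :
    analyticOrderAt f z = 0 := by
  rw [show ((0 : ENat) = ((0 : ℕ) : ENat)) from rfl, (hf.analyticAt z).analyticOrderAt_eq_natCast]
  exact ⟨f, hf.analyticAt z, hz, by simp⟩

lemma ne_zero_of_order_eq_zero' {f : ℂ → ℂ} (hf : Differentiable ℂ f) {z : ℂ}
    (h : analyticOrderAt f z = 0) : f z ≠ 0 := by
  rw [show ((0 : ENat) = ((0 : ℕ) : ENat)) from rfl, (hf.analyticAt z).analyticOrderAt_eq_natCast] at h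
  obtain ⟨g, _, hg0, hev⟩ := h
  have h2 := hev.self_of_nhds
  simp only [sub_self, pow_zero, one_smul] at h2
  rw [h2]; exact hg0

lemma zeros_finite' {f : ℂ → ℂ} (hf : Differentiable ℂ f) {w : ℂ} (hw : f w ≠ 0) (T : ℝ) :
    {z : ℂ | z ∈ closedBall (0 : ℂ) T ∧ f z = 0}.Finite := by
  by_contra hinf
  have hinf' : Set.Infinite {z : ℂ | z ∈ closedBall (0 : ℂ) T ∧ f z = 0} := hinf
  obtain ⟨x, -, hx⟩ := hinf'.exists_accPt_of_subset_isCompact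
    (isCompact_closedBall (0:ℂ) T) (fun z (hz : z ∈ closedBall (0:ℂ) T ∧ f z = 0) => hz.1)
  rw [accPt_iff_frequently] at hx
  have hfreq : ∃ᶠ y in nhdsWithin x {x}ᶜ, f y = 0 := by
    rw [frequently_nhdsWithin_iff]
    exact hx.mono (fun y hy => ⟨hy.2.2, hy.1⟩)
  have := AnalyticOnNhd.eqOn_zero_of_preconnected_of_frequently_eq_zero
    (U := Set.univ) (fun x _ => hf.analyticAt x) isPreconnected_univ (Set.mem_univ x) hfreq
  exact hw (this (Set.mem_univ w))

lemma dslope_differentiable' {f : ℂ → ℂ} (hf : Differentiable ℂ f) (a : ℂ) :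
    Differentiable ℂ (dslope f a) := by
  intro z
  rcases eq_or_ne z a with rfl | hza
  · obtain ⟨p, hp⟩ := (hf.analyticAt z : ∃ p, HasFPowerSeriesAt f p z)
    exact (HasFPowerSeriesAt.has_fpower_series_dslope_fslope hp).analyticAt.differentiableAt
  · have : DifferentiableAt ℂ (fun w => (w - a)⁻¹ * (f w - f a)) z := by
      fun_prop (disch := intros; exact sub_ne_zero.mpr hza)
    refine this.congr_of_eventuallyEq ?_
    filter_upwards [isOpen_ne.mem_nhds hza] with w hw
    rw [dslope_of_ne f hw, slope_def_field, div_eq_inv_mul]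

lemma dslope_factor' {f : ℂ → ℂ} {a : ℂ} (ha : f a = 0) (z : ℂ) :
    f z = (z - a) * dslope f a z := by
  have := sub_smul_dslope f a z
  rw [ha, sub_zero] at this
  rw [← this, smul_eq_mul]

lemma order_dslope' {f : ℂ → ℂ} (hf : Differentiable ℂ f) (h0 : f 0 ≠ 0) {a : ℂ} (ha : f a = 0)
    (z : ℂ) :
    (analyticOrderAt f z).toNat
      = (if z = a then 1 else 0)
        + (analyticOrderAt (dslope f a) z).toNat := by
  set g := dslope f a with hgdef
  have hg : Differentiable ℂ g := dslope_differentiable' hf a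
  have hg0 : g 0 ≠ 0 := by
    intro h
    apply h0
    rw [dslope_factor' ha 0, ← hgdef, h, mul_zero]
  set m : ℕ := (analyticOrderAt g z).toNat with hm
  have hordg : analyticOrderAt g z = (m : ℕ∞) :=
    (ENat.coe_toNat (order_ne_top' hg hg0 z)).symm
  obtain ⟨u, hu, hu0, hev⟩ := (hg.analyticAt z).analyticOrderAt_eq_natCast.mp hordg
  rcases eq_or_ne z a with rfl | hza
  · have : analyticOrderAt f z = ((1 + m : ℕ) : ℕ∞) := by
      rw [(hf.analyticAt z).analyticOrderAt_eq_natCast]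
      refine ⟨u, hu, hu0, ?_⟩
      filter_upwards [hev] with w hw
      rw [dslope_factor' ha w, ← hgdef, hw, smul_eq_mul, smul_eq_mul, pow_add, pow_one]
      ring
    rw [this, ENat.toNat_coe, if_pos rfl]
  · have : analyticOrderAt f z = (m : ℕ∞) := by
      rw [(hf.analyticAt z).analyticOrderAt_eq_natCast]
      refine ⟨fun w => (w - a) * u w, (analyticAt_id.sub analyticAt_const).mul hu,
        mul_ne_zero (sub_ne_zero.mpr hza) hu0, ?_⟩
      filter_upwards [hev] with w hw
      rw [dslope_factor' ha w, ← hgdef, hw, smul_eq_mul, smul_eq_mul]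
      ring
    rw [this, ENat.toNat_coe, if_neg hza, zero_add]

lemma support_finite' {f : ℂ → ℂ} (hf : Differentiable ℂ f) (h0 : f 0 ≠ 0) (T : ℝ) :
    (closedBall (0 : ℂ) T ∩ support (fun z => (analyticOrderAt f z).toNat)).Finite := by
  refine (zeros_finite' hf h0 T).subset (fun z hz => ⟨hz.1, ?_⟩)
  by_contra hne
  exact hz.2 (by
    show (analyticOrderAt f z).toNat = 0
    rw [order_eq_zero_of_ne' hf hne]; rfl)

lemma factor' (T : ℝ) : ∀ n : ℕ, ∀ f : ℂ → ℂ, ∀ hf : Differentiable ℂ f, f 0 ≠ 0 →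
    (∑ᶠ z ∈ closedBall (0:ℂ) T, (analyticOrderAt f z).toNat) = n →
    ∃ (h : ℂ → ℂ) (l : Multiset ℂ), Differentiable ℂ h ∧ Multiset.card l = n ∧
      (∀ a ∈ l, a ∈ closedBall (0:ℂ) T ∧ a ≠ 0) ∧
      ∀ z, f z = h z * (l.map (fun a => z - a)).prod := by
  intro n
  induction n with
  | zero => exact fun f hf h0 _ => ⟨f, 0, hf, rfl, by simp, by simp⟩
  | succ n ih =>
    intro f hf h0 hsum
    -- there is a zero in the ball
    have hex : ∃ a ∈ closedBall (0:ℂ) T, f a = 0 := by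
      by_contra hno
      push_neg at hno
      rw [finsum_mem_of_eqOn_zero (fun z hz => by
        rw [order_eq_zero_of_ne' hf (hno z hz)]; rfl)] at hsum
      exact (Nat.succ_ne_zero n) hsum.symm
    obtain ⟨a, haball, haz⟩ := hex
    have ha0 : a ≠ 0 := fun h => h0 (h ▸ haz)
    set g := dslope f a with hgdef
    have hg : Differentiable ℂ g := dslope_differentiable' hf a
    have hg0 : g 0 ≠ 0 := by
      intro h
      exact h0 (by rw [dslope_factor' haz 0, ← hgdef, h, mul_zero])
    have hsuppite : support (fun z : ℂ => if z = a then (1:ℕ) else 0) = {a} := by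
      ext z; by_cases h : z = a <;> simp [h]
    have hsum2 : (∑ᶠ z ∈ closedBall (0:ℂ) T, (analyticOrderAt f z).toNat)
        = (∑ᶠ z ∈ closedBall (0:ℂ) T, if z = a then (1:ℕ) else 0)
          + ∑ᶠ z ∈ closedBall (0:ℂ) T, (analyticOrderAt g z).toNat := by
      rw [← finsum_mem_add_distrib' (by rw [hsuppite]; exact (Set.finite_singleton a).inter_of_right _)
        (support_finite' hg hg0 T)]
      exact finsum_mem_congr rfl (fun z _ => order_dslope' hf h0 haz z)
    have hite : (∑ᶠ z ∈ closedBall (0:ℂ) T, if z = a then (1:ℕ) else 0) = 1 := by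
      rw [← finsum_mem_inter_support, hsuppite,
        Set.inter_eq_self_of_subset_right (Set.singleton_subset_iff.2 haball),
        finsum_mem_singleton, if_pos rfl]
    have hgsum : (∑ᶠ z ∈ closedBall (0:ℂ) T, (analyticOrderAt g z).toNat) = n := by
      rw [hsum2, hite] at hsum
      omega
    obtain ⟨h, l, hh, hcard, hmem, hfact⟩ := ih g hg hg0 hgsum
    refine ⟨h, a ::ₘ l, hh, by simp [hcard], ?_, ?_⟩
    · intro b hb
      rcases Multiset.mem_cons.mp hb with rfl | hbl
      · exact ⟨haball, ha0⟩
      · exact hmem b hbl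
    · intro z
      rw [dslope_factor' haz z, ← hgdef, hfact z, Multiset.map_cons, Multiset.prod_cons]
      ring

lemma diff_prod (l : Multiset ℂ) (p : ℂ → ℂ → ℂ) (hp : ∀ a, Differentiable ℂ (p a)) :
    Differentiable ℂ (fun z => (l.map (fun a => p a z)).prod) := by
  induction l using Multiset.induction_on with
  | empty => simpa using differentiable_const 1
  | cons a s ih =>
    simp only [Multiset.map_cons, Multiset.prod_cons]
    exact (hp a).mul ih

lemma norm_mprod (s : Multiset ℂ) : ‖s.prod‖ = (s.map (fun x => ‖x‖)).prod := by
  induction s using Multiset.induction_on with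
  | empty => simp
  | cons a s ih => rw [Multiset.prod_cons, norm_mul, ih, Multiset.map_cons, Multiset.prod_cons]

lemma prod_abs_pos (l : Multiset ℂ) (h : ∀ a ∈ l, a ≠ (0:ℂ)) :
    0 < (l.map (fun a => ‖a‖)).prod := by
  induction l using Multiset.induction_on with
  | empty => simp
  | cons a s ih =>
    simp only [Multiset.map_cons, Multiset.prod_cons]
    exact mul_pos (norm_pos_iff.mpr (h a (Multiset.mem_cons_self a s)))
      (ih (fun b hb => h b (Multiset.mem_cons_of_mem hb)))

lemma prod_abs_le (l : Multiset ℂ) {T : ℝ} (hT : 0 ≤ T) (h : ∀ a ∈ l, ‖a‖ ≤ T) :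
    (l.map (fun a => ‖a‖)).prod ≤ T ^ Multiset.card l := by
  induction l using Multiset.induction_on with
  | empty => simp
  | cons a s ih =>
    simp only [Multiset.map_cons, Multiset.prod_cons, Multiset.card_cons, pow_succ]
    rw [mul_comm (T ^ Multiset.card s) T]
    refine mul_le_mul (h a (Multiset.mem_cons_self a s))
      (ih (fun b hb => h b (Multiset.mem_cons_of_mem hb))) ?_ hT
    exact Multiset.prod_nonneg (fun x hx => by
      obtain ⟨b, -, rfl⟩ := Multiset.mem_map.mp hx; exact norm_nonneg b)

lemma sphere_factor {R : ℝ} {z : ℂ} (hz : ‖z‖ = R) (a : ℂ) :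
    ‖(R^2 : ℂ) - (starRingEnd ℂ) a * z‖ = R * ‖z - a‖ := by
  have h1 : ((R:ℂ)^2) = z * (starRingEnd ℂ) z := by
    rw [Complex.mul_conj, ← Complex.sq_norm, hz]
    push_cast
    ring
  have h2 : (R^2 : ℂ) - (starRingEnd ℂ) a * z = z * (starRingEnd ℂ) (z - a) := by
    rw [map_sub, mul_sub, ← h1]
    ring
  rw [h2, norm_mul, Complex.norm_conj, hz]

lemma count_bound' {T R M : ℝ} (hT : 0 < T) (hTR : T < R) (f : ℂ → ℂ)
    (hf : Differentiable ℂ f) (h0 : f 0 = 1)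
    (hM : ∀ z ∈ sphere (0:ℂ) R, ‖f z‖ ≤ M) (n : ℕ)
    (hn : (∑ᶠ z ∈ closedBall (0:ℂ) T, (analyticOrderAt f z).toNat) = n) :
    (R / T) ^ n ≤ M := by
  have hR0 : (0:ℝ) < R := hT.trans hTR
  obtain ⟨h, l, hh, hcard, hmem, hfact⟩ := factor' T n f hf (by rw [h0]; exact one_ne_zero) hn
  set G : ℂ → ℂ := fun z => h z * (l.map (fun a => (R^2 : ℂ) - (starRingEnd ℂ) a * z)).prod
    with hGdef
  have hG : Differentiable ℂ G :=
    hh.mul (diff_prod l (fun a z => (R^2 : ℂ) - (starRingEnd ℂ) a * z) (fun a => by fun_prop))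
  -- |f z| = |h z| * prod of |z - a|
  have habsf : ∀ z : ℂ, ‖f z‖
      = ‖h z‖ * (l.map (fun a => ‖z - a‖)).prod := by
    intro z
    rw [hfact z, norm_mul, norm_mprod, Multiset.map_map]
    simp only [Function.comp]
  have hMnn : 0 ≤ M := by
    have hsph : (R : ℂ) ∈ sphere (0:ℂ) R := by
      simp [mem_sphere_iff_norm, Complex.norm_real, abs_of_pos hR0]
    exact (norm_nonneg _).trans (hM _ hsph)
  -- bound on the sphere
  have key : ∀ z ∈ sphere (0:ℂ) R, ‖G z‖ ≤ R ^ n * M := by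
    intro z hz
    have hzR : ‖z‖ = R := by
      simpa [mem_sphere_iff_norm] using hz
    have : ‖G z‖
        = ‖h z‖ * (l.map (fun a => R * ‖z - a‖)).prod := by
      rw [hGdef]
      simp only
      rw [norm_mul, norm_mprod, Multiset.map_map]
      congr 2
      exact Multiset.map_congr rfl (fun a _ => sphere_factor hzR a)
    rw [this]
    have hprodmul : (l.map (fun a => R * ‖z - a‖)).prod
        = R ^ n * (l.map (fun a => ‖z - a‖)).prod := by
      rw [show (fun a => R * ‖z - a‖)
        = (fun a => (fun _ => R) a * (fun a => ‖z - a‖) a) from rfl]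
      rw [Multiset.prod_map_mul, Multiset.map_const', Multiset.prod_replicate, hcard]
    rw [hprodmul, ← mul_assoc, mul_comm (‖h z‖) (R ^ n), mul_assoc, ← habsf z]
    exact mul_le_mul_of_nonneg_left (hM z hz) (pow_nonneg hR0.le n)
  -- maximum modulus
  have h0G : ‖G 0‖ ≤ R ^ n * M := by
    have := Complex.norm_le_of_forall_mem_frontier_norm_le (U := ball (0:ℂ) R)
      isBounded_ball hG.diffContOnCl
      (fun z hz => key z (by rwa [frontier_ball (0:ℂ) hR0.ne'] at hz))
      (z := 0) (by rw [closure_ball (0:ℂ) hR0.ne']; exact mem_closedBall_self hR0.le)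
    exact this
  -- compute G 0 and h 0
  set P : ℝ := (l.map (fun a => ‖a‖)).prod with hPdef
  have hP0 : 0 < P := prod_abs_pos l (fun a ha => (hmem a ha).2)
  have hPT : P ≤ T ^ n := by
    rw [← hcard]
    exact prod_abs_le l hT.le (fun a ha => by
      have := (hmem a ha).1
      simpa [mem_closedBall, Complex.dist_eq] using this)
  have habsh0 : ‖h 0‖ * P = 1 := by
    have := habsf 0
    rw [h0, norm_one] at this
    rw [hPdef]
    rw [show (l.map (fun a => ‖a‖)) = (l.map (fun a => ‖(0:ℂ) - a‖)) from
      Multiset.map_congr rfl (fun a _ => by rw [zero_sub, norm_neg])]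
    exact this.symm
  have hG0 : ‖G 0‖ = ‖h 0‖ * (R^2) ^ n := by
    rw [hGdef]
    simp only [mul_zero, sub_zero]
    rw [norm_mul, norm_mprod, Multiset.map_map]
    congr 1
    rw [show ((fun x : ℂ => ‖x‖) ∘ fun _ : ℂ => (R^2:ℂ)) = (fun _ : ℂ => R^2) from
      funext (fun x => by
        simp only [Function.comp]
        rw [show ((R:ℂ)^2) = ((R^2 : ℝ) : ℂ) by push_cast; ring, Complex.norm_real, Real.norm_eq_abs,
          _root_.abs_of_nonneg (sq_nonneg R)])]
    rw [Multiset.map_const', Multiset.prod_replicate, hcard]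
  -- combine
  have hRn : (0:ℝ) < R ^ n := pow_pos hR0 n
  have hTn : (0:ℝ) < T ^ n := pow_pos hT n
  have hmain : (R^2) ^ n ≤ R ^ n * M * P := by
    have := h0G
    rw [hG0] at this
    calc (R^2) ^ n = (‖h 0‖ * (R^2) ^ n) * P := by
          rw [mul_comm (‖h 0‖) ((R^2)^n), mul_assoc, habsh0, mul_one]
      _ ≤ (R ^ n * M) * P := mul_le_mul_of_nonneg_right this hP0.le
  have hfin : R ^ n ≤ M * T ^ n := by
    have h2 : (R^2) ^ n = R ^ n * R ^ n := by rw [← pow_mul, two_mul, pow_add]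
    have h3 : R ^ n * M * P ≤ R ^ n * (M * T ^ n) := by
      rw [mul_assoc]
      exact mul_le_mul_of_nonneg_left (mul_le_mul_of_nonneg_left hPT hMnn) hRn.le
    have := (h2 ▸ hmain).trans h3
    exact le_of_mul_le_mul_left this hRn
  rw [div_pow, div_le_iff₀ hTn]
  exact hfin

/-- The number of zeros (with multiplicity) of the auxiliary function `Φ` from
Backlund's lemma in `|z| ≤ T` is bounded by
`(max_{|ζ| ≤ R} log |F(z₁ + iζ)| - log |F(z₁)|) / log (R / T)` for `0 < T < R`. -/
theorem phi_zero_count (F : ℂ → ℂ) (hF : Differentiable ℂ F)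
    (z₁ : ℂ) (hz₁ : F z₁ ≠ 0)
    (Φ : ℂ → ℂ)
    (hΦ : ∀ z : ℂ, Φ z = (1 / 2) *
      (F (z₁ + Complex.I * z) / F z₁
        + (starRingEnd ℂ) (F (z₁ + Complex.I * (starRingEnd ℂ z)))
            / (starRingEnd ℂ) (F z₁)))
    (hΦd : Differentiable ℂ Φ)
    (T R : ℝ) (hT : 0 < T) (hTR : T < R) :
    (∑ᶠ z ∈ Metric.closedBall (0 : ℂ) T, (((analyticOrderAt Φ z).toNat : ℝ)))
      ≤ (sSup ((fun ζ : ℂ => Real.log ‖F (z₁ + Complex.I * ζ)‖) ''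
            Metric.closedBall (0 : ℂ) R)
          - Real.log ‖F z₁‖) / Real.log (R / T) := by
  have hR0 : (0:ℝ) < R := hT.trans hTR
  have haF : 0 < ‖F z₁‖ := norm_pos_iff.mpr hz₁
  -- Φ 0 = 1
  have hΦ0 : Φ 0 = 1 := by
    rw [hΦ 0]
    rw [map_zero, mul_zero, add_zero, div_self hz₁, div_self (by
      rw [starRingEnd_apply]; exact star_ne_zero.mpr hz₁)]
    norm_num
  set S : ℝ := sSup ((fun ζ : ℂ => Real.log ‖F (z₁ + Complex.I * ζ)‖) ''
      Metric.closedBall (0 : ℂ) R) with hSdef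
  -- boundedness above
  obtain ⟨B, hB⟩ := (isCompact_closedBall (0:ℂ) R).exists_bound_of_continuousOn
    (f := fun ζ : ℂ => ‖F (z₁ + Complex.I * ζ)‖)
    (continuous_norm.comp_continuousOn ((hF.continuous.comp (by fun_prop : Continuous (fun ζ : ℂ => z₁ + Complex.I * ζ))).continuousOn))
  have hbdd : BddAbove ((fun ζ : ℂ => Real.log ‖F (z₁ + Complex.I * ζ)‖) ''
      Metric.closedBall (0 : ℂ) R) := by
    refine ⟨max 0 (Real.log B), ?_⟩
    rintro y ⟨ζ, hζ, rfl⟩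
    simp only
    rcases eq_or_lt_of_le (norm_nonneg (F (z₁ + Complex.I * ζ))) with he | hpos
    · rw [← he, Real.log_zero]; exact le_max_left _ _
    · refine le_trans (Real.log_le_log hpos ?_) (le_max_right _ _)
      simpa [Real.norm_eq_abs, _root_.abs_of_nonneg (norm_nonneg _)] using hB ζ hζ
  have habs_le : ∀ ζ ∈ Metric.closedBall (0:ℂ) R,
      ‖F (z₁ + Complex.I * ζ)‖ ≤ Real.exp S := by
    intro ζ hζ
    have hlog : Real.log ‖F (z₁ + Complex.I * ζ)‖ ≤ S :=
      le_csSup hbdd ⟨ζ, hζ, rfl⟩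
    rcases eq_or_lt_of_le (norm_nonneg (F (z₁ + Complex.I * ζ))) with he | hpos
    · rw [← he]; exact (Real.exp_pos S).le
    · rw [← Real.exp_log hpos]
      exact Real.exp_le_exp.mpr hlog
  -- bound for Φ on the sphere
  set M : ℝ := Real.exp S / ‖F z₁‖ with hMdef
  have hM : ∀ z ∈ sphere (0:ℂ) R, ‖Φ z‖ ≤ M := by
    intro z hz
    have hzR : ‖z‖ = R := by simpa [mem_sphere_iff_norm] using hz
    have hzball : z ∈ Metric.closedBall (0:ℂ) R := by
      simp [mem_closedBall, Complex.dist_eq, hzR]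
    have hzcball : (starRingEnd ℂ) z ∈ Metric.closedBall (0:ℂ) R := by
      simp [mem_closedBall, Complex.dist_eq, Complex.norm_conj, hzR]
    have hA := habs_le z hzball
    have hB2 := habs_le _ hzcball
    calc ‖Φ z‖
        ≤ (1/2) * (‖F (z₁ + Complex.I * z)‖ / ‖F z₁‖
          + ‖F (z₁ + Complex.I * ((starRingEnd ℂ) z))‖ / ‖F z₁‖) := by
          rw [hΦ z, norm_mul]
          have h12 : ‖(1/2 : ℂ)‖ = 1/2 := by
            rw [norm_div, norm_one]
            norm_num [Complex.norm_two]
          rw [h12]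
          refine mul_le_mul_of_nonneg_left ?_ (by norm_num)
          refine (norm_add_le _ _).trans ?_
          rw [norm_div, norm_div, Complex.norm_conj, Complex.norm_conj]
      _ ≤ (1/2) * (Real.exp S / ‖F z₁‖ + Real.exp S / ‖F z₁‖) := by
          gcongr
      _ = M := by rw [hMdef]; ring
  -- the natural number count
  set N : ℕ := ∑ᶠ z ∈ Metric.closedBall (0:ℂ) T, (analyticOrderAt Φ z).toNat with hNdef
  have hΦ0' : Φ 0 ≠ 0 := by rw [hΦ0]; exact one_ne_zero
  have hfin := support_finite' hΦd hΦ0' T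
  have hcast : (∑ᶠ z ∈ Metric.closedBall (0 : ℂ) T, (((analyticOrderAt Φ z).toNat : ℝ)))
      = (N : ℝ) := by
    have hsupp : support (fun z => ((analyticOrderAt Φ z).toNat : ℝ))
        = support (fun z => (analyticOrderAt Φ z).toNat) := by
      ext z; simp
    have h1 : (Metric.closedBall (0 : ℂ) T ∩
        support (fun z => ((analyticOrderAt Φ z).toNat : ℝ))).Finite := by
      rw [hsupp]; exact hfin
    rw [finsum_mem_eq_sum _ h1, hNdef, finsum_mem_eq_sum _ hfin]
    have hfs : h1.toFinset = hfin.toFinset := by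
      ext z
      simp only [Set.Finite.mem_toFinset, Set.mem_inter_iff, hsupp]
    rw [hfs, Nat.cast_sum]
  have hpow := count_bound' hT hTR Φ hΦd hΦ0 hM N hNdef.symm
  have hMpos : 0 < M := div_pos (Real.exp_pos S) haF
  have hlogRT : 0 < Real.log (R / T) := Real.log_pos ((one_lt_div hT).mpr hTR)
  have hkey : (N:ℝ) * Real.log (R / T) ≤ Real.log M := by
    rw [← Real.log_pow]
    exact Real.log_le_log (pow_pos (div_pos hR0 hT) N) hpow
  have hlogM : Real.log M = S - Real.log ‖F z₁‖ := by
    rw [hMdef, Real.log_div (Real.exp_pos S).ne' haF.ne', Real.log_exp]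
  rw [hcast, le_div_iff₀ hlogRT]
  rw [hlogM] at hkey
  exact hkey
end

section
/- Let f(z) = 1 + H_1 e^{w_1 z} + ... + H_n e^{w_n z} be a normalized exponential sum, set H_0 = 1, w_0 = 0, and suppose x_1 < x_2 are real numbers and j, k ∈ {0, 1, ..., n} are indices such that |H_j| e^{w_j x_1} > Σ_{l ≠ j} |H_l| e^{w_l x_1} and |H_k| e^{w_k x_2} > Σ_{l ≠ k} |H_l| e^{w_l x_2}. Then there exists a constant C > 0 such that for every y ∈ ℝ for which f has no zeros on the horizontal segment {t + iy : x_1 ≤ t ≤ x_2}, |Re{(1/(2πi)) ∫_{x_1 + iy}^{x_2 + iy} f'(z)/f(z) dz}| ≤ C, where the integral is taken along that horizontal segment. -/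
open Complex intervalIntegral Finset


open Finset

/-- An exponential sum with `m` distinct frequencies vanishing at `m` distinct points
has all coefficients zero. -/
lemma expsum_coeffs_zero : ∀ (m : ℕ) (s : Finset ℝ) (c : ℝ → ℝ) (T : Finset ℝ),
    s.card = m → m ≤ T.card →
    (∀ x ∈ T, ∑ μ ∈ s, c μ * Real.exp (μ * x) = 0) → ∀ μ ∈ s, c μ = 0 := by
  intro m
  induction m with
  | zero =>
    intro s c T hs _ _ μ hμ
    rw [Finset.card_eq_zero] at hs
    simp [hs] at hμ
  | succ m ih =>
    intro s c T hs hT hz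
    have hne : s.Nonempty := Finset.card_pos.mp (by omega)
    set μ₀ := s.min' hne with hμ₀def
    have hμ₀s : μ₀ ∈ s := s.min'_mem hne
    have hT' : m + 1 ≤ T.card := hT
    set t : Fin (m + 1) ↪o ℝ := T.orderEmbOfCardLe hT' with htdef
    have htT : ∀ i, t i ∈ T := fun i => T.orderEmbOfCardLe_mem hT' i
    set h₁ : ℝ → ℝ := fun x => ∑ μ ∈ s, c μ * Real.exp ((μ - μ₀) * x) with hh₁
    have h₁eq : ∀ x : ℝ, h₁ x = Real.exp (-(μ₀ * x)) * ∑ μ ∈ s, c μ * Real.exp (μ * x) := by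
      intro x
      rw [Finset.mul_sum]
      refine Finset.sum_congr rfl fun μ _ => ?_
      rw [mul_comm (Real.exp (-(μ₀ * x))), mul_assoc, ← Real.exp_add]
      ring_nf
    have h₁zero : ∀ i, h₁ (t i) = 0 := by
      intro i
      rw [h₁eq, hz (t i) (htT i), mul_zero]
    set D : ℝ → ℝ := fun x => ∑ μ ∈ s, (c μ * (μ - μ₀)) * Real.exp ((μ - μ₀) * x) with hD
    have hDderiv : ∀ x, HasDerivAt h₁ (D x) x := by
      intro x
      refine HasDerivAt.fun_sum fun μ _ => ?_
      have h1 : HasDerivAt (fun x : ℝ => (μ - μ₀) * x) (μ - μ₀) x := by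
        simpa using (hasDerivAt_id x).const_mul (μ - μ₀)
      have h2 := (h1.exp).const_mul (c μ)
      convert h2 using 1
      · rfl
      ring
    have h₁cont : Continuous h₁ := by
      rw [continuous_iff_continuousAt]
      exact fun x => (hDderiv x).continuousAt
    have hrolle : ∀ i : Fin m, ∃ r ∈ Set.Ioo (t i.castSucc : ℝ) (t i.succ), D r = 0 := by
      intro i
      have hlt : (t i.castSucc : ℝ) < t i.succ := t.strictMono Fin.castSucc_lt_succ
      obtain ⟨r, hrmem, hdr⟩ := exists_deriv_eq_zero hlt h₁cont.continuousOn
        (by rw [h₁zero, h₁zero])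
      refine ⟨r, hrmem, ?_⟩
      rwa [(hDderiv r).deriv] at hdr
    choose r hrmem hrzero using hrolle
    have hrmono : StrictMono r := by
      intro i j hij
      have h1 : r i < t i.succ := (hrmem i).2
      have h2 : (t j.castSucc : ℝ) < r j := (hrmem j).1
      have h3 : (i.succ : Fin (m + 1)) ≤ j.castSucc := by
        rw [Fin.le_def]
        simp only [Fin.val_succ, Fin.coe_castSucc]
        exact hij
      exact lt_of_lt_of_le h1 (le_trans (t.monotone h3) h2.le)
    set T' : Finset ℝ := Finset.image r Finset.univ with hT'def
    have hT'card : T'.card = m := by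
      rw [hT'def, Finset.card_image_of_injective _ hrmono.injective, Finset.card_univ,
        Fintype.card_fin]
    set s' : Finset ℝ := (s.erase μ₀).image (fun μ => μ - μ₀) with hs'def
    have hs'card : s'.card = m := by
      rw [hs'def, Finset.card_image_of_injective _ (sub_left_injective),
        Finset.card_erase_of_mem hμ₀s, hs]
      omega
    set c' : ℝ → ℝ := fun ν => c (ν + μ₀) * ν with hc'def
    have hsum : ∀ x : ℝ, ∑ ν ∈ s', c' ν * Real.exp (ν * x) = D x := by
      intro x
      rw [hs'def, Finset.sum_image (fun a _ b _ h => sub_left_injective h)]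
      have he : ∑ μ ∈ s.erase μ₀, (c μ * (μ - μ₀)) * Real.exp ((μ - μ₀) * x) = D x :=
        Finset.sum_erase s (by simp)
      rw [← he]
      refine Finset.sum_congr rfl fun μ _ => ?_
      rw [hc'def]
      simp only [sub_add_cancel]
    have hc'zero : ∀ ν ∈ s', c' ν = 0 := by
      refine ih s' c' T' hs'card (le_of_eq hT'card.symm) ?_
      intro x hx
      rw [hT'def] at hx
      obtain ⟨i, _, rfl⟩ := Finset.mem_image.mp hx
      rw [hsum]
      exact hrzero i
    have herase : ∀ μ ∈ s.erase μ₀, c μ = 0 := by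
      intro μ hμ
      have hmem : μ - μ₀ ∈ s' := Finset.mem_image_of_mem _ hμ
      have := hc'zero _ hmem
      rw [hc'def] at this
      simp only [sub_add_cancel] at this
      rcases mul_eq_zero.mp this with h | h
      · exact h
      · exact absurd (sub_eq_zero.mp h) (Finset.mem_erase.mp hμ).1
    intro μ hμ
    rcases eq_or_ne μ μ₀ with rfl | hne'
    · have h0 := hz (t 0) (htT 0)
      rw [← Finset.sum_erase_add s _ hμ₀s] at h0
      rw [Finset.sum_eq_zero (fun ν hν => by rw [herase ν hν, zero_mul]), zero_add] at h0
      rcases mul_eq_zero.mp h0 with h | h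
      · exact h
      · exact absurd h (Real.exp_ne_zero _)
    · exact herase μ (Finset.mem_erase.mpr ⟨hne', hμ⟩)

open intervalIntegral

lemma exp_log_integral {g G : ℝ → ℂ}
    (hg : ∀ x, HasDerivAt g (G x) x) (hGc : Continuous G)
    (h0 : ∀ x ∈ Set.Icc (0:ℝ) 1, g x ≠ 0) :
    ContinuousOn (fun u => ∫ x in (0:ℝ)..u, G x / g x) (Set.Icc (0:ℝ) 1) ∧
    ∀ u ∈ Set.Icc (0:ℝ) 1,
      g u = g 0 * Complex.exp (∫ x in (0:ℝ)..u, G x / g x) := by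
  have hgc : Continuous g := by
    rw [continuous_iff_continuousAt]; exact fun x => (hg x).continuousAt
  set F : ℝ → ℂ := fun x => G x / g x with hFdef
  set U : Set ℝ := g ⁻¹' {(0:ℂ)}ᶜ with hUdef
  have hUopen : IsOpen U := isOpen_compl_singleton.preimage hgc
  have hUmem : ∀ x ∈ Set.Icc (0:ℝ) 1, x ∈ U := fun x hx => h0 x hx
  have hFU : ContinuousOn F U :=
    hGc.continuousOn.div hgc.continuousOn (fun x hx => hx)
  have hFicc : ContinuousOn F (Set.Icc (0:ℝ) 1) := hFU.mono hUmem
  have hFint : ∀ u ∈ Set.Icc (0:ℝ) 1, IntervalIntegrable F MeasureTheory.volume 0 u := by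
    intro u hu
    refine (hFicc.mono ?_).intervalIntegrable
    rw [Set.uIcc_of_le hu.1]
    exact fun x hx => ⟨hx.1, le_trans hx.2 hu.2⟩
  set L : ℝ → ℂ := fun u => ∫ x in (0:ℝ)..u, F x with hLdef
  have hLcont : ContinuousOn L (Set.Icc (0:ℝ) 1) := by
    have := intervalIntegral.continuousOn_primitive_interval'
      (hFint 1 ⟨zero_le_one, le_refl 1⟩) (Set.left_mem_uIcc (a := (0:ℝ)) (b := 1))
    rwa [Set.uIcc_of_le zero_le_one] at this
  have hLderiv : ∀ x ∈ Set.Ico (0:ℝ) 1, HasDerivWithinAt L (F x) (Set.Ici x) x := by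
    intro x hx
    have hxIcc : x ∈ Set.Icc (0:ℝ) 1 := ⟨hx.1, hx.2.le⟩
    have hmeas : StronglyMeasurableAtFilter F (nhdsWithin x (Set.Ioi x))
        MeasureTheory.volume :=
      ⟨U, mem_nhdsWithin_of_mem_nhds (hUopen.mem_nhds (hUmem x hxIcc)),
        hFU.aestronglyMeasurable hUopen.measurableSet⟩
    have hcont : ContinuousWithinAt F (Set.Ioi x) x :=
      (hFU.continuousAt (hUopen.mem_nhds (hUmem x hxIcc))).continuousWithinAt
    exact intervalIntegral.integral_hasDerivWithinAt_right (hFint x hxIcc) hmeas hcont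
  set φ : ℝ → ℂ := fun u => g u * Complex.exp (-(L u)) with hφdef
  have hφcont : ContinuousOn φ (Set.Icc (0:ℝ) 1) :=
    hgc.continuousOn.mul (hLcont.neg.cexp)
  have hφderiv : ∀ x ∈ Set.Ico (0:ℝ) 1, HasDerivWithinAt φ 0 (Set.Ici x) x := by
    intro x hx
    have hxIcc : x ∈ Set.Icc (0:ℝ) 1 := ⟨hx.1, hx.2.le⟩
    have h1 : HasDerivWithinAt g (G x) (Set.Ici x) x := (hg x).hasDerivWithinAt
    have h2 : HasDerivWithinAt (fun u => Complex.exp (-(L u)))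
        (Complex.exp (-(L x)) * (-(F x))) (Set.Ici x) x := ((hLderiv x hx).neg).cexp
    have h3 := h1.mul h2
    have hx0 : g x ≠ 0 := h0 x hxIcc
    have heq : G x * Complex.exp (-(L x)) + g x * (Complex.exp (-(L x)) * (-(F x))) = 0 := by
      rw [hFdef]
      field_simp
      ring
    rwa [heq] at h3
  have hconst := constant_of_has_deriv_right_zero hφcont hφderiv
  refine ⟨hLcont, ?_⟩
  intro u hu
  have h1 := hconst u hu
  have h2 : φ 0 = g 0 := by
    simp [hφdef, hLdef, intervalIntegral.integral_same]
  rw [h2] at h1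
  have h3 : g u = φ u * Complex.exp (L u) := by
    rw [hφdef]
    simp only []
    rw [mul_assoc, ← Complex.exp_add, neg_add_cancel, Complex.exp_zero, mul_one]
  rw [h3, h1]


set_option maxHeartbeats 1000000 in
/-- The real part of the logarithmic integral of a normalized exponential sum along a
horizontal segment crossing a critical strip (with endpoints in zero-free regions
dominated by the terms `j` and `k`) is bounded uniformly in the height `y`. -/
theorem horizontal_log_integral_bounded {n : ℕ} (hn : 1 ≤ n)
    (H : Fin (n + 1) → ℂ) (w : Fin (n + 1) → ℝ)
    (hH0 : H 0 = 1) (hw0 : w 0 = 0)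
    (hH : ∀ j, H j ≠ 0) (hw : StrictMono w)
    (f : ℂ → ℂ)
    (hf : ∀ z : ℂ, f z = ∑ j : Fin (n + 1), H j * Complex.exp (w j * z))
    (x₁ x₂ : ℝ) (hx : x₁ < x₂) (j k : Fin (n + 1))
    (hdomj : ∑ l ∈ Finset.univ.erase j, ‖H l‖ * Real.exp (w l * x₁)
        < ‖H j‖ * Real.exp (w j * x₁))
    (hdomk : ∑ l ∈ Finset.univ.erase k, ‖H l‖ * Real.exp (w l * x₂)
        < ‖H k‖ * Real.exp (w k * x₂)) :
    ∃ C : ℝ, 0 < C ∧ ∀ y : ℝ,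
      (∀ t : ℝ, x₁ ≤ t → t ≤ x₂ → f ((t : ℂ) + y * Complex.I) ≠ 0) →
      |((1 / (2 * Real.pi * Complex.I)) *
          ∫ t in (0:ℝ)..1,
            (deriv f ((x₁ : ℂ) + y * Complex.I + t * ((x₂ : ℝ) - x₁))
                / f ((x₁ : ℂ) + y * Complex.I + t * ((x₂ : ℝ) - x₁)))
              * (((x₂ : ℝ) - x₁ : ℝ) : ℂ)).re| ≤ C := by
  have hπ : (0:ℝ) < Real.pi := Real.pi_pos
  refine ⟨(n:ℝ) + 1, by positivity, fun y hy => ?_⟩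
  -- the path and restricted functions
  set γ : ℝ → ℂ := fun t => (x₁ : ℂ) + y * Complex.I + t * ((x₂ : ℝ) - x₁) with hγdef
  set g : ℝ → ℂ := fun t => f (γ t) with hgdef
  set Cc : ℂ := (x₂ : ℂ) - x₁ with hCcdef
  set G : ℝ → ℂ := fun t => deriv f (γ t) * Cc with hGdef
  -- derivative of f
  set f' : ℂ → ℂ := fun z => ∑ l : Fin (n+1), H l * (Complex.exp ((w l : ℂ) * z) * (w l : ℂ))
    with hf'def
  have hfd : ∀ z : ℂ, HasDerivAt f (f' z) z := by
    intro z
    have hsum : HasDerivAt (fun z => ∑ l : Fin (n+1), H l * Complex.exp ((w l : ℂ) * z))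
        (f' z) z := by
      refine HasDerivAt.fun_sum fun l _ => ?_
      have h1 : HasDerivAt (fun z : ℂ => (w l : ℂ) * z) ((w l : ℂ)) z := by
        simpa using (hasDerivAt_id z).const_mul ((w l : ℂ))
      exact (h1.cexp).const_mul (H l)
    rwa [show f = fun z => ∑ l : Fin (n+1), H l * Complex.exp ((w l : ℂ) * z) from funext hf]
  have hderiv : ∀ z : ℂ, deriv f z = f' z := fun z => (hfd z).deriv
  -- derivative of g
  have hγd : ∀ t : ℝ, HasDerivAt γ Cc t := by
    intro t
    have h1 : HasDerivAt (fun t : ℝ => (t : ℂ)) 1 t := Complex.ofRealCLM.hasDerivAt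
    have := (h1.mul_const Cc).const_add ((x₁ : ℂ) + y * Complex.I)
    simpa [hγdef] using this
  have hgd : ∀ t : ℝ, HasDerivAt g (G t) t := by
    intro t
    have h := HasDerivAt.comp t (hfd (γ t)) (hγd t)
    show HasDerivAt g (deriv f (γ t) * Cc) t
    rw [hderiv (γ t)]
    exact h
  -- continuity of G
  have hγc : Continuous γ := by fun_prop
  have hGc : Continuous G := by
    have hG : G = fun t => f' (γ t) * Cc := by
      funext t; show deriv f (γ t) * Cc = _; rw [hderiv]
    rw [hG, hf'def]
    apply Continuous.mul _ continuous_const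
    apply continuous_finset_sum
    intro l _
    fun_prop
  -- nonvanishing on [0,1]
  have h0 : ∀ x ∈ Set.Icc (0:ℝ) 1, g x ≠ 0 := by
    intro t ht
    have hform : γ t = ((x₁ + t * (x₂ - x₁) : ℝ) : ℂ) + y * Complex.I := by
      rw [hγdef]; push_cast; ring
    show f (γ t) ≠ 0
    rw [hform]
    refine hy _ ?_ ?_
    · nlinarith [ht.1, ht.2]
    · nlinarith [ht.1, ht.2]
  obtain ⟨hLcont, hglog⟩ := exp_log_integral hgd hGc h0
  set L : ℝ → ℂ := fun u => ∫ x in (0:ℝ)..u, G x / g x with hLdef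
  -- identify the integral in the goal with L 1
  have key : (∫ t in (0:ℝ)..1,
      (deriv f ((x₁ : ℂ) + y * Complex.I + t * ((x₂ : ℝ) - x₁))
        / f ((x₁ : ℂ) + y * Complex.I + t * ((x₂ : ℝ) - x₁)))
      * (((x₂ : ℝ) - x₁ : ℝ) : ℂ)) = L 1 := by
    rw [hLdef]
    refine intervalIntegral.integral_congr fun t _ => ?_
    show deriv f (γ t) / f (γ t) * (((x₂ - x₁ : ℝ)) : ℂ) = deriv f (γ t) * Cc / f (γ t)
    rw [hCcdef]
    push_cast
    rw [div_mul_eq_mul_div]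
  rw [key]
  -- real part extraction
  have hre : ∀ z : ℂ, ((1 / (2 * (Real.pi:ℂ) * Complex.I)) * z).re = z.im / (2 * Real.pi) := by
    intro z
    have hπc : (Real.pi:ℂ) ≠ 0 := Complex.ofReal_ne_zero.mpr Real.pi_ne_zero
    have hc : (1 / (2 * (Real.pi:ℂ) * Complex.I)) = ((-(1/(2*Real.pi)) : ℝ) : ℂ) * Complex.I := by
      rw [div_eq_iff (by simp [Real.pi_ne_zero, Complex.I_ne_zero] :
        (2 * (Real.pi:ℂ) * Complex.I) ≠ 0)]
      push_cast
      field_simp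
      rw [Complex.I_sq]
      ring
    rw [hc, mul_assoc, Complex.re_ofReal_mul, Complex.I_mul_re]
    field_simp
  rw [hre]
  -- the main bound : |(L 1).im| ≤ π (n+1)
  have claim : |(L 1).im| ≤ Real.pi * (n + 1) := by
    by_contra hclaim
    push_neg at hclaim
    set θ₀ : ℝ := Complex.arg (g 0) with hθdef
    set ψ : ℝ → ℝ := fun u => (L u).im + θ₀ with hψdef
    have hψc : ContinuousOn ψ (Set.Icc (0:ℝ) 1) :=
      (Complex.continuous_im.comp_continuousOn hLcont).add continuousOn_const
    have hL0 : L 0 = 0 := intervalIntegral.integral_same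
    have habs0 : ‖g 0‖ ≠ 0 := by
      simp only [norm_ne_zero_iff]; exact h0 0 ⟨le_refl 0, zero_le_one⟩
    -- real part formula
    have hRe0 : ∀ u ∈ Set.Icc (0:ℝ) 1,
        (g u).re = ‖g 0‖ * (Real.exp ((L u).re) * Real.cos (ψ u)) := by
      intro u hu
      have h1 : g u = (‖g 0‖ : ℂ) * Complex.exp ((θ₀ : ℂ) * Complex.I + L u) := by
        rw [hglog u hu]
        conv_lhs => rw [← Complex.norm_mul_exp_arg_mul_I (g 0)]
        rw [mul_assoc, ← Complex.exp_add, hθdef]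
      rw [h1]
      rw [Complex.re_ofReal_mul, Complex.exp_re]
      simp [hψdef, add_comm]
    have hcoszero : ∀ u ∈ Set.Icc (0:ℝ) 1, ((g u).re = 0 ↔ Real.cos (ψ u) = 0) := by
      intro u hu
      rw [hRe0 u hu]
      simp [habs0, Real.exp_ne_zero]
    -- exponential sum representation of (g u).re
    set μ : Fin (n+1) → ℝ := fun l => w l * (x₂ - x₁) with hμdef
    have hd : x₂ - x₁ ≠ 0 := sub_ne_zero.mpr hx.ne'
    have hμinj : Function.Injective μ := fun a b hab =>
      hw.injective (mul_right_cancel₀ hd hab)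
    set c₀ : Fin (n+1) → ℝ :=
      fun l => (H l * Complex.exp ((w l : ℂ) * ((x₁:ℂ) + y * Complex.I))).re with hc₀def
    have hgre : ∀ u : ℝ, (g u).re = ∑ l : Fin (n+1), c₀ l * Real.exp (μ l * u) := by
      intro u
      show (f (γ u)).re = _
      rw [hf (γ u), Complex.re_sum]
      refine Finset.sum_congr rfl fun l _ => ?_
      have harg : (w l : ℂ) * γ u = (w l : ℂ) * ((x₁:ℂ) + y * Complex.I) + ((μ l * u : ℝ) : ℂ) := by
        rw [hγdef, hμdef]; push_cast; ring
      rw [harg, Complex.exp_add, ← mul_assoc, ← Complex.ofReal_exp,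
        mul_comm (H l * Complex.exp ((w l : ℂ) * ((x₁:ℂ) + y * Complex.I))),
        Complex.re_ofReal_mul]
      exact mul_comm _ _
    set s : Finset ℝ := Finset.image μ Finset.univ with hsdef
    have hscard : s.card = n + 1 := by
      rw [hsdef, Finset.card_image_of_injective _ hμinj, Finset.card_univ, Fintype.card_fin]
    set cfun : ℝ → ℝ := fun ν => ∑ l ∈ Finset.univ.filter (fun l => μ l = ν), c₀ l with hcfdef
    have hcfun : ∀ l, cfun (μ l) = c₀ l := by
      intro l
      have hfilter : Finset.univ.filter (fun l' => μ l' = μ l) = {l} := by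
        ext l'; simp [hμinj.eq_iff]
      show (∑ l' ∈ Finset.univ.filter (fun l' => μ l' = μ l), c₀ l') = c₀ l
      rw [hfilter, Finset.sum_singleton]
    have htransfer : ∀ x : ℝ, ∑ ν ∈ s, cfun ν * Real.exp (ν * x) = (g x).re := by
      intro x
      rw [hsdef, Finset.sum_image (fun a _ b _ hab => hμinj hab), hgre]
      exact Finset.sum_congr rfl fun l _ => by rw [hcfun]
    -- counting zeros of cos ∘ ψ
    set a : ℝ := min (ψ 0) (ψ 1) with hadef
    set b : ℝ := max (ψ 0) (ψ 1) with hbdef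
    have hψdiff : ψ 1 - ψ 0 = (L 1).im := by
      rw [hψdef]; simp [hL0]
    have hba : b - a = |(L 1).im| := by
      rw [hadef, hbdef, max_sub_min_eq_abs, ← hψdiff]
    have hbagt : Real.pi * (n + 1) < b - a := by rw [hba]; exact hclaim
    set m₀ : ℤ := ⌊(a - Real.pi/2)/Real.pi⌋ + 1 with hm₀def
    set v : ℕ → ℝ := fun i => Real.pi/2 + (m₀:ℝ) * Real.pi + i * Real.pi with hvdef
    have hv0gt : a < v 0 := by
      have h1 : (a - Real.pi/2)/Real.pi < (m₀ : ℝ) := by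
        rw [hm₀def]; push_cast; exact Int.lt_floor_add_one _
      rw [div_lt_iff₀ hπ] at h1
      rw [hvdef]; simp; linarith
    have hv0le : v 0 ≤ a + Real.pi := by
      have h1 : ((m₀ : ℝ) - 1) ≤ (a - Real.pi/2)/Real.pi := by
        rw [hm₀def]; push_cast; simp; exact Int.floor_le _
      rw [le_div_iff₀ hπ] at h1
      rw [hvdef]; simp; nlinarith
    have hIVT : Set.uIcc (ψ 0) (ψ 1) ⊆ ψ '' Set.Icc 0 1 := by
      have h := intermediate_value_uIcc (by rwa [Set.uIcc_of_le zero_le_one] :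
        ContinuousOn ψ (Set.uIcc (0:ℝ) 1))
      rwa [Set.uIcc_of_le zero_le_one] at h
    have hmemu : ∀ x : ℝ, a ≤ x → x ≤ b → x ∈ Set.uIcc (ψ 0) (ψ 1) := by
      intro x h1 h2
      rcases le_total (ψ 0) (ψ 1) with h | h
      · rw [Set.uIcc_of_le h]
        exact ⟨by rw [hadef, min_eq_left h] at h1; exact h1,
               by rw [hbdef, max_eq_right h] at h2; exact h2⟩
      · rw [Set.uIcc_of_ge h]
        exact ⟨by rw [hadef, min_eq_right h] at h1; exact h1,
               by rw [hbdef, max_eq_left h] at h2; exact h2⟩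
    have hgoodv : ∀ i : ℕ, i ≤ n → a < v i ∧ v i < b := by
      intro i hi
      constructor
      · refine lt_of_lt_of_le hv0gt ?_
        rw [hvdef]; simp; positivity
      · have h1 : v i ≤ v 0 + i * Real.pi := by rw [hvdef]; simp
        have h2 : (i:ℝ) * Real.pi ≤ n * Real.pi := by
          have : (i:ℝ) ≤ n := by exact_mod_cast hi
          nlinarith
        nlinarith
    have hpt : ∀ i : ℕ, i ≤ n → ∃ x ∈ Set.Icc (0:ℝ) 1, ψ x = v i := by
      intro i hi
      obtain ⟨hlt1, hlt2⟩ := hgoodv i hi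
      obtain ⟨x, hxmem, hxval⟩ := hIVT (hmemu (v i) hlt1.le hlt2.le)
      exact ⟨x, hxmem, hxval⟩
    choose! tf htf hψtf using hpt
    have hvinj : ∀ i j : ℕ, v i = v j → i = j := by
      intro i j hij
      rw [hvdef] at hij
      simp only at hij
      have : (i:ℝ) = (j:ℝ) := by
        exact mul_right_cancel₀ Real.pi_ne_zero (by linarith : (i:ℝ) * Real.pi = j * Real.pi)
      exact_mod_cast this
    have hTinj : Set.InjOn tf (Finset.range (n+1)) := by
      intro i hi j hj hij
      simp only [Finset.coe_range, Set.mem_Iio] at hi hj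
      have h1 : ψ (tf i) = v i := hψtf i (by omega)
      have h2 : ψ (tf j) = v j := hψtf j (by omega)
      exact hvinj i j (by rw [← h1, ← h2, hij])
    set T : Finset ℝ := (Finset.range (n+1)).image tf with hTdef
    have hTcard : T.card = n + 1 := by
      rw [hTdef, Finset.card_image_of_injOn hTinj, Finset.card_range]
    have hzeros : ∀ x ∈ T, ∑ ν ∈ s, cfun ν * Real.exp (ν * x) = 0 := by
      intro x hxT
      rw [hTdef, Finset.mem_image] at hxT
      obtain ⟨i, hi, rfl⟩ := hxT
      rw [Finset.mem_range] at hi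
      have hin : i ≤ n := by omega
      rw [htransfer]
      refine (hcoszero (tf i) (htf i hin)).mpr ?_
      rw [hψtf i hin, hvdef]
      refine Real.cos_eq_zero_iff.mpr ⟨m₀ + i, ?_⟩
      push_cast; ring
    have hczero := expsum_coeffs_zero (n+1) s cfun T hscard (le_of_eq hTcard.symm) hzeros
    have hc₀zero : ∀ l, c₀ l = 0 := by
      intro l
      have := hczero (μ l) (Finset.mem_image_of_mem μ (Finset.mem_univ l))
      rwa [hcfun] at this
    have hgre0 : ∀ u : ℝ, (g u).re = 0 := by
      intro u
      rw [hgre]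
      exact Finset.sum_eq_zero fun l _ => by rw [hc₀zero, zero_mul]
    -- contradiction at the extra point
    set v' : ℝ := ((m₀:ℝ) + 1) * Real.pi with hv'def
    have hv0eq : v 0 = Real.pi/2 + (m₀:ℝ) * Real.pi := by
      show Real.pi/2 + (m₀:ℝ) * Real.pi + (0:ℕ) * Real.pi = _
      norm_num
    have hv'eq : v' = v 0 + Real.pi/2 := by rw [hv0eq, hv'def]; ring
    clear_value a b v v' m₀
    have hv'gt : a < v' := by
      rw [hv'eq]; linarith [hv0gt, hπ]
    have hv'lt : v' < b := by
      have h2 : (2:ℝ) ≤ (n:ℝ) + 1 := by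
        have : (1:ℝ) ≤ (n:ℝ) := by exact_mod_cast hn
        linarith
      have h3 : Real.pi * 2 ≤ Real.pi * ((n:ℝ) + 1) := by nlinarith
      rw [hv'eq]; linarith [hv0le, hbagt]
    obtain ⟨x', hx'mem, hx'val⟩ := hIVT (hmemu v' hv'gt.le hv'lt.le)
    have hcos' : Real.cos (ψ x') = 0 := (hcoszero x' hx'mem).mp (hgre0 x')
    rw [hx'val, hv'def] at hcos'
    obtain ⟨kk, hkk⟩ := Real.cos_eq_zero_iff.mp hcos'
    have : (2 * (m₀ + 1) : ℝ) = 2 * kk + 1 := by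
      field_simp at hkk
      nlinarith [Real.pi_ne_zero, hkk]
    have hint : (2 * (m₀ + 1) : ℤ) = 2 * kk + 1 := by exact_mod_cast this
    omega
  -- conclude
  have h1 : |(L 1).im / (2 * Real.pi)| = |(L 1).im| / (2 * Real.pi) := by
    rw [abs_div, abs_of_pos (by positivity : (0:ℝ) < 2 * Real.pi)]
  rw [h1]
  rw [div_le_iff₀ (by positivity : (0:ℝ) < 2 * Real.pi)]
  nlinarith [claim]
end

section
/- Let (z_m) be a sequence of complex numbers ordered with nondecreasing modulus, and suppose there is a constant A > 0 such that for all t ≥ 0 the number n(t) of indices m with |z_m| ≤ t satisfies n(t) ≤ A t + A. Then the series Σ_m (1 + |z_m|)^{-1} (log(e + |z_m|))^{-2} converges. -/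
set_option maxHeartbeats 800000

open Complex

/-- If a sequence `(z_m)`, ordered with nondecreasing modulus, has counting function
`n(t) ≤ A t + A`, then `∑ (1 + |z_m|)⁻¹ (log (e + |z_m|))⁻²` converges. -/
theorem summable_of_counting_bound (z : ℕ → ℂ)
    (hmono : Monotone fun m => ‖z m‖)
    (A : ℝ) (hA : 0 < A)
    (hfin : ∀ t : ℝ, 0 ≤ t → {m : ℕ | ‖z m‖ ≤ t}.Finite)
    (hcount : ∀ t : ℝ, 0 ≤ t →
      (Nat.card {m : ℕ | ‖z m‖ ≤ t} : ℝ) ≤ A * t + A) :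
    Summable fun m : ℕ =>
      (1 + ‖z m‖)⁻¹ * ((Real.log (Real.exp 1 + ‖z m‖)) ^ 2)⁻¹ := by
  set a : ℕ → ℝ := fun m => ‖z m‖ with ha
  have hapos : ∀ m, 0 ≤ a m := fun m => norm_nonneg _
  -- key counting inequality: m + 1 ≤ A * (1 + a m)
  have hkey : ∀ m : ℕ, (m + 1 : ℝ) ≤ A * (1 + a m) := by
    intro m
    have hf := hfin (a m) (hapos m)
    have hsub : Finset.range (m + 1) ⊆ hf.toFinset := by
      intro k hk
      rw [Set.Finite.mem_toFinset]
      exact hmono (Nat.lt_succ_iff.mp (Finset.mem_range.mp hk))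
    have hcard : (m + 1 : ℕ) ≤ Nat.card {k : ℕ | a k ≤ a m} := by
      rw [Nat.card_eq_card_finite_toFinset hf]
      simpa using Finset.card_le_card hsub
    have := hcount (a m) (hapos m)
    have h2 : (m + 1 : ℝ) ≤ (Nat.card {k : ℕ | a k ≤ a m} : ℝ) := by exact_mod_cast hcard
    nlinarith
  -- the log factor is at least 1
  have hloge : ∀ m, 1 ≤ Real.log (Real.exp 1 + a m) := by
    intro m
    rw [Real.le_log_iff_exp_le (by positivity)]
    simpa using hapos m
  set g : ℕ → ℝ := fun m => (1 + a m)⁻¹ * ((Real.log (Real.exp 1 + a m)) ^ 2)⁻¹ with hg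
  have hgnonneg : ∀ m, 0 ≤ g m := by
    intro m
    apply mul_nonneg (inv_nonneg.2 (by linarith [hapos m]))
    exact inv_nonneg.2 (sq_nonneg _)
  have hganti : ∀ ⦃m n : ℕ⦄, 0 < m → m ≤ n → g n ≤ g m := by
    intro m n _ hmn
    have hle : a m ≤ a n := hmono hmn
    apply mul_le_mul
    · exact inv_anti₀ (by linarith [hapos m]) (by linarith)
    · apply inv_anti₀ (by nlinarith [hloge m])
      have h1 : Real.log (Real.exp 1 + a m) ≤ Real.log (Real.exp 1 + a n) :=
        Real.log_le_log (by positivity) (by linarith)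
      nlinarith [hloge m, hloge n]
    · exact inv_nonneg.2 (sq_nonneg _)
    · exact inv_nonneg.2 (by linarith [hapos m])
  rw [← summable_condensed_iff_of_nonneg hgnonneg hganti]
  -- compare with ∑ 1 / n^2
  have hsum2 : Summable fun n : ℕ => 1 / (n : ℝ) ^ 2 :=
    Real.summable_one_div_nat_pow.mpr one_lt_two
  apply summable_of_isBigO_nat hsum2
  rw [Asymptotics.isBigO_iff]
  refine ⟨A * 4 / Real.log 2 ^ 2, ?_⟩
  have hlog2 : 0 < Real.log 2 := Real.log_pos one_lt_two
  have hev : ∀ᶠ (n : ℕ) in Filter.atTop, Real.log A ≤ (n : ℝ) / 2 * Real.log 2 := by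
    have ht : Filter.Tendsto (fun n : ℕ => (n : ℝ) / 2 * Real.log 2) Filter.atTop Filter.atTop :=
      (tendsto_natCast_atTop_atTop.atTop_div_const two_pos).atTop_mul_const hlog2
    exact ht.eventually_ge_atTop _
  filter_upwards [hev, Filter.eventually_ge_atTop 1] with n hn hn1
  have hn0 : (0:ℝ) < (n : ℝ) := by exact_mod_cast hn1
  set b := a (2 ^ n) with hb
  have hb0 : 0 ≤ b := hapos _
  have hk := hkey (2 ^ n)
  have h2n : (0:ℝ) < (2:ℝ) ^ n := by positivity
  have h2n' : ((2 ^ n : ℕ) : ℝ) = (2:ℝ) ^ n := by push_cast; ring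
  rw [h2n'] at hk
  -- bound 2^n * (1+b)⁻¹ ≤ A
  have h1b : (0:ℝ) < 1 + b := by linarith
  have hbd1 : (2:ℝ) ^ n * (1 + b)⁻¹ ≤ A := by
    rw [mul_inv_le_iff₀ h1b]
    nlinarith
  -- bound log factor
  have hlogb : (n : ℝ) / 2 * Real.log 2 ≤ Real.log (Real.exp 1 + b) := by
    have h1 : (2:ℝ) ^ n / A ≤ Real.exp 1 + b := by
      have he : (1:ℝ) ≤ Real.exp 1 := by
        have := Real.exp_one_gt_d9; linarith
      rw [div_le_iff₀ hA]
      nlinarith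
    have h2 : Real.log ((2:ℝ) ^ n / A) ≤ Real.log (Real.exp 1 + b) :=
      Real.log_le_log (by positivity) h1
    rw [Real.log_div (by positivity) (ne_of_gt hA), Real.log_pow] at h2
    have : (n : ℝ) / 2 * Real.log 2 ≤ (n : ℝ) * Real.log 2 - Real.log A := by linarith
    linarith
  have hlogbpos : 0 < Real.log (Real.exp 1 + b) := lt_of_lt_of_le zero_lt_one (hloge _)
  have hsq : ((n : ℝ) / 2 * Real.log 2) ^ 2 ≤ (Real.log (Real.exp 1 + b)) ^ 2 := by
    apply sq_le_sq' <;> nlinarith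
  have hinv : ((Real.log (Real.exp 1 + b)) ^ 2)⁻¹ ≤ (((n : ℝ) / 2 * Real.log 2) ^ 2)⁻¹ :=
    inv_anti₀ (by positivity) hsq
  have hgb : g (2 ^ n) = (1 + b)⁻¹ * ((Real.log (Real.exp 1 + b)) ^ 2)⁻¹ := rfl
  have hnorm1 : ‖(2:ℝ) ^ n * g (2 ^ n)‖ = (2:ℝ) ^ n * g (2 ^ n) := by
    rw [Real.norm_eq_abs, _root_.abs_of_nonneg (mul_nonneg (le_of_lt h2n) (hgnonneg _))]
  rw [hnorm1]
  have hnorm2 : ‖1 / (n : ℝ) ^ 2‖ = 1 / (n : ℝ) ^ 2 := by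
    rw [Real.norm_eq_abs, _root_.abs_of_nonneg (by positivity)]
  rw [hnorm2]
  calc (2:ℝ) ^ n * g (2 ^ n)
      = ((2:ℝ) ^ n * (1 + b)⁻¹) * ((Real.log (Real.exp 1 + b)) ^ 2)⁻¹ := by
        rw [hgb]; ring
    _ ≤ A * (((n : ℝ) / 2 * Real.log 2) ^ 2)⁻¹ := by
        apply mul_le_mul hbd1 hinv (inv_nonneg.2 (sq_nonneg _)) (le_of_lt hA)
    _ = A * 4 / Real.log 2 ^ 2 * (1 / (n : ℝ) ^ 2) := by
        field_simp
        ring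
end
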